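/- arXiv:0710.3027 — 6 statements merged into one kernel-verified Lean document; each statement's English description precedes it below -/
import Mathlib

section
/- Let p be a probability distribution on a finite set A, and for two families of density operators (D_a)_{a∈A}, (E_a)_{a∈A} on a finite-dimensional Hilbert space H define ρ = Σ_a p(a)|a⟩⟨a| ⊗ D_a, σ = Σ_a p(a) D_a, and τ = Σ_a p(a) E_a. Then S(ρ || p ⊗ τ) ≥ S(ρ || p ⊗ σ), with equality if and only if τ = σ (Donald's inequality for cq-states). Moreover, when supp(ρ) ≤ supp(p ⊗ τ), the difference equals S(σ || τ). -/
open Matrix Kronecker BigOperators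
open scoped ComplexOrder
open Classical

noncomputable def matFun {n : Type*} [Fintype n] [DecidableEq n]
    (f : ℝ → ℝ) (m : Matrix n n ℂ) : Matrix n n ℂ :=
  if h : m.IsHermitian then
    (h.eigenvectorUnitary : Matrix n n ℂ) *
      Matrix.diagonal (fun i => (f (h.eigenvalues i) : ℂ)) *
      star (h.eigenvectorUnitary : Matrix n n ℂ)
  else 0

noncomputable def matLog {n : Type*} [Fintype n] [DecidableEq n] (m : Matrix n n ℂ) :
    Matrix n n ℂ := matFun (Real.logb 2) m

/-- von Neumann entropy (base 2). -/
noncomputable def vnEnt {n : Type*} [Fintype n] [DecidableEq n] (m : Matrix n n ℂ) : ℝ :=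
  -((m * matLog m).trace.re)

/-- support domination: supp ρ ≤ supp σ. -/
def SuppLe {n : Type*} [Fintype n] (ρ σ : Matrix n n ℂ) : Prop :=
  ∀ v : n → ℂ, σ.mulVec v = 0 → ρ.mulVec v = 0

/-- quantum relative entropy (finite branch, base 2). -/
noncomputable def qRel {n : Type*} [Fintype n] [DecidableEq n] (ρ σ : Matrix n n ℂ) : ℝ :=
  ((ρ * matLog ρ).trace - (ρ * matLog σ).trace).re

/-- quantum relative entropy with the value +∞ when supports are not dominated. -/
noncomputable def qRelE {n : Type*} [Fintype n] [DecidableEq n] (ρ σ : Matrix n n ℂ) : EReal :=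
  if SuppLe ρ σ then ((qRel ρ σ : ℝ) : EReal) else ⊤

def IsDensity {n : Type*} [Fintype n] (ρ : Matrix n n ℂ) : Prop :=
  ρ.PosSemidef ∧ ρ.trace = 1

def IsProb {A : Type*} [Fintype A] (p : A → ℝ) : Prop :=
  (∀ a, 0 ≤ p a) ∧ ∑ a, p a = 1

/-- cq-state Σ_a p(a) |a⟩⟨a| ⊗ D_a. -/
noncomputable def cqState {A : Type*} [Fintype A] [DecidableEq A] {d : ℕ}
    (p : A → ℝ) (D : A → Matrix (Fin d) (Fin d) ℂ) :
    Matrix (A × Fin d) (A × Fin d) ℂ :=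
  ∑ a, (p a : ℂ) • (Matrix.single a a 1 ⊗ₖ D a)

/-- the average output state Σ_a p(a) D_a. -/
noncomputable def avgState {A : Type*} [Fintype A] {d : ℕ}
    (p : A → ℝ) (D : A → Matrix (Fin d) (Fin d) ℂ) : Matrix (Fin d) (Fin d) ℂ :=
  ∑ a, (p a : ℂ) • D a

/-- Holevo information χ(p, W) -/
noncomputable def holevo {A : Type*} [Fintype A] {d : ℕ}
    (p : A → ℝ) (W : A → Matrix (Fin d) (Fin d) ℂ) : ℝ :=
  vnEnt (avgState p W) - ∑ a, p a * vnEnt (W a)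

/-- trace norm -/
noncomputable def traceNorm {n : Type*} [Fintype n] [DecidableEq n] (m : Matrix n n ℂ) : ℝ :=
  (matFun Real.sqrt (mᴴ * m)).trace.re

/-- n-fold tensor product of matrices (entrywise formula). -/
noncomputable def bigKron {d n : ℕ} (ρ : Fin n → Matrix (Fin d) (Fin d) ℂ) :
    Matrix (Fin n → Fin d) (Fin n → Fin d) ℂ :=
  Matrix.of fun x y => ∏ i, ρ i (x i) (y i)

set_option linter.unusedSectionVars false
set_option maxHeartbeats 1000000

lemma herm_of_decomp {n : Type*} [Fintype n] [DecidableEq n]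
    (V : Matrix n n ℂ) (μ : n → ℝ) :
    (V * Matrix.diagonal (fun i => (μ i : ℂ)) * Vᴴ).IsHermitian := by
  unfold Matrix.IsHermitian
  rw [conjTranspose_mul, conjTranspose_mul, conjTranspose_conjTranspose,
    diagonal_conjTranspose, mul_assoc]
  congr 2
  ext i
  simp [Pi.star_def]

lemma matFun_spectral {n : Type*} [Fintype n] [DecidableEq n]
    (f : ℝ → ℝ) {X V : Matrix n n ℂ} {μ : n → ℝ}
    (hV : V * Vᴴ = 1) (hV' : Vᴴ * V = 1)
    (hX : X = V * Matrix.diagonal (fun i => (μ i : ℂ)) * Vᴴ) :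
    matFun f X = V * Matrix.diagonal (fun i => (f (μ i) : ℂ)) * Vᴴ := by
  have hherm : X.IsHermitian := hX ▸ herm_of_decomp V μ
  rw [matFun, dif_pos hherm]
  set U : Matrix n n ℂ := (hherm.eigenvectorUnitary : Matrix n n ℂ) with hU
  have hUU : U * star U = 1 := (Matrix.mem_unitaryGroup_iff).mp hherm.eigenvectorUnitary.2
  have hUU' : star U * U = 1 := (Matrix.mem_unitaryGroup_iff').mp hherm.eigenvectorUnitary.2
  set Dl : Matrix n n ℂ := Matrix.diagonal (fun i => (hherm.eigenvalues i : ℂ)) with hDl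
  set Dm : Matrix n n ℂ := Matrix.diagonal (fun i => (μ i : ℂ)) with hDm
  have hspec : X = U * Dl * star U := by
    have := hherm.spectral_theorem
    rw [this]; rfl
  set W : Matrix n n ℂ := star U * V with hW
  have hcomm : Dl * W = W * Dm := by
    have h1 : star U * X * V = Dl * W := by
      conv_lhs => rw [hspec]
      calc star U * (U * Dl * star U) * V = (star U * U) * Dl * (star U * V) := by
            noncomm_ring
        _ = Dl * W := by rw [hUU', one_mul, hW]
    have h2 : star U * X * V = W * Dm := by
      conv_lhs => rw [hX]
      calc star U * (V * Dm * Vᴴ) * V = (star U * V) * Dm * (Vᴴ * V) := by noncomm_ring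
        _ = W * Dm := by rw [hV', mul_one, hW]
    rw [← h1, h2]
  have hcomm2 : Matrix.diagonal (fun i => (f (hherm.eigenvalues i) : ℂ)) * W
      = W * Matrix.diagonal (fun i => (f (μ i) : ℂ)) := by
    ext i j
    have h := Matrix.ext_iff.mpr hcomm i j
    rw [hDl, hDm, Matrix.diagonal_mul, Matrix.mul_diagonal] at h
    rw [Matrix.diagonal_mul, Matrix.mul_diagonal]
    rcases eq_or_ne (W i j) 0 with h0 | h0
    · rw [h0, mul_zero, zero_mul]
    · have : (hherm.eigenvalues i : ℂ) = (μ j : ℂ) := by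
        refine mul_left_cancel₀ h0 ?_
        rw [← h]; ring
      have : hherm.eigenvalues i = μ j := by exact_mod_cast this
      rw [this, mul_comm]
  calc U * Matrix.diagonal (fun i => (f (hherm.eigenvalues i) : ℂ)) * star U
      = U * Matrix.diagonal (fun i => (f (hherm.eigenvalues i) : ℂ)) * star U * (V * Vᴴ) := by
        rw [hV, mul_one]
    _ = U * (Matrix.diagonal (fun i => (f (hherm.eigenvalues i) : ℂ)) * W) * Vᴴ := by
        rw [hW]; noncomm_ring
    _ = U * (W * Matrix.diagonal (fun i => (f (μ i) : ℂ))) * Vᴴ := by rw [hcomm2]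
    _ = (U * star U) * (V * Matrix.diagonal (fun i => (f (μ i) : ℂ)) * Vᴴ) := by
        rw [hW]; noncomm_ring
    _ = V * Matrix.diagonal (fun i => (f (μ i) : ℂ)) * Vᴴ := by rw [hUU, one_mul]

section Helpers
variable {n : Type*} [Fintype n] [DecidableEq n]

-- trace of B * (V * diagonal c * Vᴴ)
lemma trace_conj_diag (B V : Matrix n n ℂ) (c : n → ℂ) :
    (B * (V * Matrix.diagonal c * Vᴴ)).trace = ∑ j, c j * (Vᴴ * B * V) j j := by
  have h1 : B * (V * Matrix.diagonal c * Vᴴ) = (B * V * Matrix.diagonal c) * Vᴴ := by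
    noncomm_ring
  rw [h1, Matrix.trace_mul_comm, ← Matrix.mul_assoc, ← Matrix.mul_assoc, Matrix.trace]
  simp only [Matrix.diag_apply, Matrix.mul_diagonal]
  exact Finset.sum_congr rfl fun j _ => by ring

lemma conj_entry (B V : Matrix n n ℂ) (j : n) :
    (Vᴴ * B * V) j j = star (fun k => V k j) ⬝ᵥ B.mulVec (fun k => V k j) := by
  simp only [Matrix.mul_apply, Matrix.conjTranspose_apply, Matrix.mulVec, dotProduct,
    Pi.star_apply, Finset.sum_mul, Finset.mul_sum]
  rw [Finset.sum_comm]
  exact Finset.sum_congr rfl fun k _ => Finset.sum_congr rfl fun l _ => by ring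

lemma psd_entry_real {B : Matrix n n ℂ} (hB : B.PosSemidef) (V : Matrix n n ℂ) (j : n) :
    (Vᴴ * B * V) j j = (((Vᴴ * B * V) j j).re : ℂ) ∧ 0 ≤ ((Vᴴ * B * V) j j).re := by
  have h : 0 ≤ (Vᴴ * B * V) j j := by
    rw [conj_entry]
    exact hB.dotProduct_mulVec_nonneg _
  rw [Complex.le_def] at h
  constructor
  · apply Complex.ext <;> simp [← h.2]
  · simpa using h.1

lemma sum_diag_conj {V : Matrix n n ℂ} (B : Matrix n n ℂ) (hV : V * Vᴴ = 1) :
    ∑ j, (Vᴴ * B * V) j j = B.trace := by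
  have : ∑ j, (Vᴴ * B * V) j j = (Vᴴ * B * V).trace := rfl
  rw [this, Matrix.trace_mul_cycle, hV, Matrix.one_mul]

lemma mulVec_col {X V : Matrix n n ℂ} {μ : n → ℝ} (hV' : Vᴴ * V = 1)
    (hX : X = V * Matrix.diagonal (fun i => (μ i : ℂ)) * Vᴴ) (j : n) :
    X.mulVec (fun k => V k j) = fun k => (μ j : ℂ) * V k j := by
  have hXV : X * V = V * Matrix.diagonal (fun i => (μ i : ℂ)) := by
    rw [hX]
    calc V * Matrix.diagonal (fun i => (μ i : ℂ)) * Vᴴ * V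
        = V * Matrix.diagonal (fun i => (μ i : ℂ)) * (Vᴴ * V) := by noncomm_ring
      _ = V * Matrix.diagonal (fun i => (μ i : ℂ)) := by rw [hV', mul_one]
  funext k
  have h := Matrix.ext_iff.mpr hXV k j
  rw [Matrix.mul_diagonal] at h
  calc X.mulVec (fun l => V l j) k = (X * V) k j := by
        simp [Matrix.mul_apply, Matrix.mulVec, dotProduct]
    _ = (μ j : ℂ) * V k j := by rw [h]; ring

lemma conj_diag_entry (V : Matrix n n ℂ) (c : n → ℝ) (j : n) :
    ((Vᴴ * Matrix.diagonal (fun i => (c i : ℂ)) * V) j j) = ∑ k, (c k : ℂ) * Complex.normSq (V k j) := by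
  rw [Matrix.mul_apply]
  refine Finset.sum_congr rfl fun k _ => ?_
  rw [Matrix.mul_diagonal, Matrix.conjTranspose_apply]
  rw [show (star (V k j)) * (c k : ℂ) * V k j = (c k : ℂ) * (V k j * (starRingEnd ℂ) (V k j)) by
    rw [Complex.star_def]; ring, Complex.mul_conj]

lemma sum_mulVec' {ι : Type*} (s : Finset ι) (M : ι → Matrix n n ℂ) (v : n → ℂ) :
    (∑ i ∈ s, M i).mulVec v = ∑ i ∈ s, (M i).mulVec v := by
  induction s using Finset.cons_induction with
  | empty => simp [Matrix.zero_mulVec]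
  | cons a s ha ih => rw [Finset.sum_cons, Finset.sum_cons, Matrix.add_mulVec, ih]

lemma dot_sum {ι : Type*} (s : Finset ι) (v : n → ℂ) (f : ι → n → ℂ) :
    v ⬝ᵥ (∑ b ∈ s, f b) = ∑ b ∈ s, v ⬝ᵥ f b := by
  induction s using Finset.cons_induction with
  | empty => simp
  | cons a s ha ih => rw [Finset.sum_cons, Finset.sum_cons, dotProduct_add, ih]

lemma col_mul_entry (M N : Matrix n n ℂ) (k j : n) :
    (M * N) k j = M.mulVec (fun l => N l j) k := by
  simp [Matrix.mul_apply, Matrix.mulVec, dotProduct]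

end Helpers

section Kron
variable {A : Type*} [Fintype A] [DecidableEq A] {n : Type*} [Fintype n] [DecidableEq n]

lemma kron_conjTranspose (M : Matrix A A ℂ) (N : Matrix n n ℂ) :
    (M ⊗ₖ N)ᴴ = Mᴴ ⊗ₖ Nᴴ := by
  ext ⟨a, i⟩ ⟨b, j⟩
  simp [Matrix.conjTranspose_apply, Matrix.kroneckerMap_apply, mul_comm]

lemma kron_unitary {V : Matrix n n ℂ} (hV : V * Vᴴ = 1) :
    ((1 : Matrix A A ℂ) ⊗ₖ V) * ((1 : Matrix A A ℂ) ⊗ₖ V)ᴴ = 1 := by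
  rw [kron_conjTranspose, Matrix.conjTranspose_one, ← Matrix.mul_kronecker_mul,
    Matrix.one_mul, hV, Matrix.one_kronecker_one]

end Kron


lemma gibbs_pointwise (a b : ℝ) (ha : 0 ≤ a) (hb : 0 ≤ b) (hab : 0 < a → 0 < b) :
    (a - b ≤ a * Real.log a - a * Real.log b) ∧
    (a * Real.log a - a * Real.log b = a - b ↔ a = b) := by
  rcases eq_or_lt_of_le ha with h0 | h0
  · constructor
    · simp [← h0]; linarith
    · simp [← h0]
      constructor
      · intro h; linarith
      · intro h; linarith
  · have hb' : 0 < b := hab h0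
    have hlog : Real.log (b / a) ≤ b / a - 1 := Real.log_le_sub_one_of_pos (by positivity)
    have hkey : a * Real.log a - a * Real.log b = -(a * Real.log (b / a)) := by
      rw [Real.log_div (ne_of_gt hb') (ne_of_gt h0)]
      ring
    constructor
    · rw [hkey]
      have := mul_le_mul_of_nonneg_left hlog (le_of_lt h0)
      have h2 : a * (b / a - 1) = b - a := by field_simp
      nlinarith
    · constructor
      · intro h
        by_contra hne
        have hne' : b / a ≠ 1 := by
          intro hc
          apply hne
          field_simp at hc
          linarith
        have hstrict : Real.log (b / a) < b / a - 1 :=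
          Real.log_lt_sub_one_of_pos (by positivity) hne'
        rw [hkey] at h
        have h2 : a * (b / a - 1) = b - a := by field_simp
        nlinarith
      · intro h; rw [h]; ring

lemma gibbs {ι : Type*} [Fintype ι] (q s : ι → ℝ) (hq : ∀ i, 0 ≤ q i) (hs : ∀ i, 0 ≤ s i)
    (hsum : ∑ i, q i = ∑ i, s i) (hsupp : ∀ i, 0 < q i → 0 < s i) :
    0 ≤ ∑ i, (q i * Real.logb 2 (q i) - q i * Real.logb 2 (s i)) ∧
    (∑ i, (q i * Real.logb 2 (q i) - q i * Real.logb 2 (s i)) = 0 ↔ q = s) := by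
  have hlog2 : (0:ℝ) < Real.log 2 := Real.log_pos (by norm_num)
  have hrw : ∀ i, q i * Real.logb 2 (q i) - q i * Real.logb 2 (s i)
      = (q i * Real.log (q i) - q i * Real.log (s i)) / Real.log 2 := by
    intro i; rw [Real.logb, Real.logb]; ring
  have hident : ∑ i, (q i * Real.logb 2 (q i) - q i * Real.logb 2 (s i))
      = (∑ i, (q i * Real.log (q i) - q i * Real.log (s i))) / Real.log 2 := by
    rw [Finset.sum_div]; exact Finset.sum_congr rfl fun i _ => hrw i
  have hpt := fun i => gibbs_pointwise (q i) (s i) (hq i) (hs i) (hsupp i)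
  have hle : ∀ i ∈ Finset.univ, q i - s i ≤ q i * Real.log (q i) - q i * Real.log (s i) :=
    fun i _ => (hpt i).1
  have hsumle : (0:ℝ) ≤ ∑ i, (q i * Real.log (q i) - q i * Real.log (s i)) := by
    calc (0:ℝ) = ∑ i, (q i - s i) := by rw [Finset.sum_sub_distrib, hsum]; ring
      _ ≤ _ := Finset.sum_le_sum hle
  constructor
  · rw [hident]; positivity
  · rw [hident]
    rw [div_eq_zero_iff]
    constructor
    · intro h
      rcases h with h | h
      · -- sum of natural-log terms is zero
        have hzero : ∑ i, (q i - s i) = 0 := by rw [Finset.sum_sub_distrib, hsum]; ring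
        have heq : ∀ i ∈ Finset.univ, q i - s i = q i * Real.log (q i) - q i * Real.log (s i) := by
          apply (Finset.sum_eq_sum_iff_of_le hle).mp
          rw [h, hzero]
        funext i
        exact ((hpt i).2.1 (heq i (Finset.mem_univ i)).symm)
      · exact absurd h (ne_of_gt hlog2)
    · intro h
      left
      apply Finset.sum_eq_zero
      intro i _
      rw [h]; ring

section AVG
variable {A : Type*} [Fintype A] [DecidableEq A] {d : ℕ}
variable (p : A → ℝ) (D : A → Matrix (Fin d) (Fin d) ℂ)

lemma smul_psd {a : ℝ} (ha : 0 ≤ a) {M : Matrix (Fin d) (Fin d) ℂ} (hM : M.PosSemidef) :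
    ((a : ℂ) • M).PosSemidef := by
  refine Matrix.PosSemidef.of_dotProduct_mulVec_nonneg ?_ ?_
  · unfold Matrix.IsHermitian
    rw [Matrix.conjTranspose_smul, hM.1.eq]
    congr 1
    simp [Complex.ext_iff]
  · intro x
    rw [Matrix.smul_mulVec, dotProduct_smul]
    have := hM.dotProduct_mulVec_nonneg x
    rw [smul_eq_mul]
    exact mul_nonneg (by exact_mod_cast Complex.zero_le_real.mpr ha) this

lemma avg_psd (hp : ∀ a, 0 ≤ p a) (hD : ∀ a, (D a).PosSemidef) :
    (avgState p D).PosSemidef := by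
  unfold avgState
  induction (Finset.univ : Finset A) using Finset.cons_induction with
  | empty => simp [Matrix.PosSemidef.zero]
  | cons a s ha ih =>
    rw [Finset.sum_cons]
    exact (smul_psd (hp a) (hD a)).add ih

lemma avg_trace (hp : ∑ a, p a = 1) (hD : ∀ a, (D a).trace = 1) :
    (avgState p D).trace = 1 := by
  unfold avgState
  rw [Matrix.trace_sum]
  simp only [Matrix.trace_smul, hD, smul_eq_mul, mul_one]
  exact_mod_cast congrArg (Complex.ofReal) hp

lemma cq_entry (a b : A) (i j : Fin d) :
    cqState p D (a, i) (b, j) = if a = b then (p a : ℂ) * D a i j else 0 := by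
  unfold cqState
  rw [Matrix.sum_apply]
  simp only [Matrix.smul_apply, Matrix.kroneckerMap_apply, smul_eq_mul]
  rcases eq_or_ne a b with rfl | hab
  · rw [Finset.sum_eq_single a]
    · simp [Matrix.single_apply_same]
    · intro c _ hc
      simp [Matrix.single, hc, hc.symm]
    · simp
  · rw [if_neg hab]
    apply Finset.sum_eq_zero
    intro c _
    have : Matrix.single c c (1:ℂ) a b = 0 := by
      simp [Matrix.single]
      intro h1 h2; exact absurd (h1 ▸ h2) hab
    simp [this]

lemma chi_entry (X : Matrix (Fin d) (Fin d) ℂ) (a b : A) (i j : Fin d) :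
    (Matrix.diagonal (fun a => (p a : ℂ)) ⊗ₖ X) (a, i) (b, j)
      = if a = b then (p a : ℂ) * X i j else 0 := by
  simp only [Matrix.kroneckerMap_apply, Matrix.diagonal_apply]
  split_ifs <;> simp

end AVG

section CQ
variable {A : Type*} [Fintype A] [DecidableEq A] {d : ℕ}
variable (p : A → ℝ) (D : A → Matrix (Fin d) (Fin d) ℂ)

lemma kron_unitary' {V : Matrix (Fin d) (Fin d) ℂ} (hV' : Vᴴ * V = 1) :
    ((1 : Matrix A A ℂ) ⊗ₖ V)ᴴ * ((1 : Matrix A A ℂ) ⊗ₖ V) = 1 := by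
  rw [kron_conjTranspose, Matrix.conjTranspose_one, ← Matrix.mul_kronecker_mul,
    Matrix.one_mul, hV', Matrix.one_kronecker_one]

lemma cq_conj_expand (V : Matrix (Fin d) (Fin d) ℂ) :
    ((1 : Matrix A A ℂ) ⊗ₖ V)ᴴ * cqState p D * ((1 : Matrix A A ℂ) ⊗ₖ V)
      = ∑ b, (p b : ℂ) • (Matrix.single b b 1 ⊗ₖ (Vᴴ * D b * V)) := by
  rw [kron_conjTranspose, Matrix.conjTranspose_one]
  unfold cqState
  rw [Finset.mul_sum, Finset.sum_mul]
  apply Finset.sum_congr rfl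
  intro b _
  rw [mul_smul_comm, smul_mul_assoc]
  congr 1
  rw [← Matrix.mul_kronecker_mul, ← Matrix.mul_kronecker_mul, Matrix.one_mul, Matrix.mul_one]

lemma cq_conj_diag (V : Matrix (Fin d) (Fin d) ℂ) (a : A) (j : Fin d) :
    (((1 : Matrix A A ℂ) ⊗ₖ V)ᴴ * cqState p D * ((1 : Matrix A A ℂ) ⊗ₖ V)) (a, j) (a, j)
      = (p a : ℂ) * (Vᴴ * D a * V) j j := by
  rw [cq_conj_expand]
  rw [Matrix.sum_apply]
  rw [Finset.sum_eq_single a]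
  · simp [Matrix.single_apply_same]
  · intro c _ hc
    have : Matrix.single c c (1:ℂ) a a = 0 := by
      simp [Matrix.single, hc, hc.symm]
    simp [this]
  · simp

lemma chi_decomp {X V : Matrix (Fin d) (Fin d) ℂ} {μ : Fin d → ℝ}
    (hX : X = V * Matrix.diagonal (fun i => (μ i : ℂ)) * Vᴴ) :
    Matrix.diagonal (fun a => (p a : ℂ)) ⊗ₖ X
      = ((1 : Matrix A A ℂ) ⊗ₖ V)
        * Matrix.diagonal (fun x : A × Fin d => ((p x.1 * μ x.2 : ℝ) : ℂ))
        * ((1 : Matrix A A ℂ) ⊗ₖ V)ᴴ := by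
  have hdd : (Matrix.diagonal fun x : A × Fin d => ((p x.1 * μ x.2 : ℝ) : ℂ))
      = (Matrix.diagonal fun a => (p a : ℂ)) ⊗ₖ (Matrix.diagonal fun i => (μ i : ℂ)) := by
    ext ⟨a, i⟩ ⟨b, j⟩
    rcases eq_or_ne a b with rfl | hab
    · rcases eq_or_ne i j with rfl | hij
      · simp [Matrix.diagonal_apply]
      · simp [Matrix.diagonal_apply, hij]
    · simp [Matrix.diagonal_apply, hab]
  rw [hdd, kron_conjTranspose,
    Matrix.conjTranspose_one, ← Matrix.mul_kronecker_mul, ← Matrix.mul_kronecker_mul,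
    Matrix.one_mul, Matrix.mul_one, ← hX]

lemma trace_cq_matLog (hD : ∀ a, (D a).PosSemidef)
    {X V : Matrix (Fin d) (Fin d) ℂ} {μ : Fin d → ℝ}
    (hV : V * Vᴴ = 1) (hV' : Vᴴ * V = 1)
    (hX : X = V * Matrix.diagonal (fun i => (μ i : ℂ)) * Vᴴ) :
    (cqState p D * matLog (Matrix.diagonal (fun a => (p a : ℂ)) ⊗ₖ X)).trace.re
      = ∑ a, ∑ j, (p a * ((Vᴴ * D a * V) j j).re) * Real.logb 2 (p a * μ j) := by
  have hlog : matLog (Matrix.diagonal (fun a => (p a : ℂ)) ⊗ₖ X)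
      = ((1 : Matrix A A ℂ) ⊗ₖ V)
        * Matrix.diagonal (fun x : A × Fin d => ((Real.logb 2 (p x.1 * μ x.2) : ℝ) : ℂ))
        * ((1 : Matrix A A ℂ) ⊗ₖ V)ᴴ := by
    exact matFun_spectral (Real.logb 2) (kron_unitary hV) (kron_unitary' hV')
      (chi_decomp p hX)
  rw [hlog, trace_conj_diag, Fintype.sum_prod_type]
  have hterm : ∀ (a : A) (j : Fin d),
      ((Real.logb 2 (p a * μ j) : ℂ)
          * ((((1 : Matrix A A ℂ) ⊗ₖ V)ᴴ * cqState p D * ((1 : Matrix A A ℂ) ⊗ₖ V)) (a, j) (a, j)))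
        = (((p a * ((Vᴴ * D a * V) j j).re) * Real.logb 2 (p a * μ j) : ℝ) : ℂ) := by
    intro a j
    rw [cq_conj_diag]
    set c := ((Vᴴ * D a * V) j j).re with hcdef
    rw [(psd_entry_real (hD a) V j).1, ← hcdef]
    push_cast
    ring
  have h1 : ∑ a, ∑ j, ((Real.logb 2 (p a * μ j) : ℂ)
          * ((((1 : Matrix A A ℂ) ⊗ₖ V)ᴴ * cqState p D * ((1 : Matrix A A ℂ) ⊗ₖ V)) (a, j) (a, j)))
      = ∑ a, ∑ j, (((p a * ((Vᴴ * D a * V) j j).re) * Real.logb 2 (p a * μ j) : ℝ) : ℂ) :=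
    Finset.sum_congr rfl fun a _ => Finset.sum_congr rfl fun j _ => hterm a j
  have h2 : ∑ a, ∑ j, (((p a * ((Vᴴ * D a * V) j j).re) * Real.logb 2 (p a * μ j) : ℝ) : ℂ)
      = ((∑ a, ∑ j, (p a * ((Vᴴ * D a * V) j j).re) * Real.logb 2 (p a * μ j) : ℝ) : ℂ) := by
    push_cast; ring
  rw [h1, h2, Complex.ofReal_re]

lemma cq_mulVec (w : A × Fin d → ℂ) (a : A) (i : Fin d) :
    (cqState p D).mulVec w (a, i) = (p a : ℂ) * (D a).mulVec (fun k => w (a, k)) i := by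
  have hterm : ∀ c, (∑ k, cqState p D (a,i) (c,k) * w (c,k))
      = if a = c then (p a : ℂ) * (D a).mulVec (fun k => w (a,k)) i else 0 := by
    intro c
    rcases eq_or_ne a c with rfl | hac
    · rw [if_pos rfl, Matrix.mulVec, dotProduct, Finset.mul_sum]
      refine Finset.sum_congr rfl fun k _ => ?_
      rw [cq_entry, if_pos rfl]; ring
    · rw [if_neg hac]
      apply Finset.sum_eq_zero
      intro k _
      rw [cq_entry, if_neg hac, zero_mul]
  calc (cqState p D).mulVec w (a, i) = ∑ y : A × Fin d, cqState p D (a,i) y * w y := rfl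
    _ = ∑ c, ∑ k, cqState p D (a,i) (c,k) * w (c,k) := by rw [Fintype.sum_prod_type]
    _ = ∑ c, if a = c then (p a : ℂ) * (D a).mulVec (fun k => w (a,k)) i else 0 :=
        Finset.sum_congr rfl fun c _ => hterm c
    _ = _ := by rw [Finset.sum_ite_eq]; simp

lemma chi_mulVec (X : Matrix (Fin d) (Fin d) ℂ) (w : A × Fin d → ℂ) (a : A) (i : Fin d) :
    (Matrix.diagonal (fun a => (p a : ℂ)) ⊗ₖ X).mulVec w (a, i)
      = (p a : ℂ) * X.mulVec (fun k => w (a, k)) i := by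
  have hterm : ∀ c, (∑ k, (Matrix.diagonal (fun a => (p a : ℂ)) ⊗ₖ X) (a,i) (c,k) * w (c,k))
      = if a = c then (p a : ℂ) * X.mulVec (fun k => w (a,k)) i else 0 := by
    intro c
    rcases eq_or_ne a c with rfl | hac
    · rw [if_pos rfl, Matrix.mulVec, dotProduct, Finset.mul_sum]
      refine Finset.sum_congr rfl fun k _ => ?_
      rw [chi_entry, if_pos rfl]; ring
    · rw [if_neg hac]
      apply Finset.sum_eq_zero
      intro k _
      rw [chi_entry, if_neg hac, zero_mul]
  calc (Matrix.diagonal (fun a => (p a : ℂ)) ⊗ₖ X).mulVec w (a, i)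
      = ∑ y : A × Fin d, (Matrix.diagonal (fun a => (p a : ℂ)) ⊗ₖ X) (a,i) y * w y := rfl
    _ = ∑ c, ∑ k, (Matrix.diagonal (fun a => (p a : ℂ)) ⊗ₖ X) (a,i) (c,k) * w (c,k) := by
        rw [Fintype.sum_prod_type]
    _ = ∑ c, if a = c then (p a : ℂ) * X.mulVec (fun k => w (a,k)) i else 0 :=
        Finset.sum_congr rfl fun c _ => hterm c
    _ = _ := by rw [Finset.sum_ite_eq]; simp

end CQ

/-- Donald's inequality for cq-states, the equality condition, and the
identity for the difference of relative entropies. -/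
theorem stmt1 {A : Type*} [Fintype A] [DecidableEq A] {d : ℕ}
    (p : A → ℝ) (hp : IsProb p) (D E : A → Matrix (Fin d) (Fin d) ℂ)
    (hD : ∀ a, IsDensity (D a)) (hE : ∀ a, IsDensity (E a)) :
    (qRelE (cqState p D) (Matrix.diagonal (fun a => (p a : ℂ)) ⊗ₖ avgState p D) ≤
        qRelE (cqState p D) (Matrix.diagonal (fun a => (p a : ℂ)) ⊗ₖ avgState p E))
    ∧ (qRelE (cqState p D) (Matrix.diagonal (fun a => (p a : ℂ)) ⊗ₖ avgState p E) =
        qRelE (cqState p D) (Matrix.diagonal (fun a => (p a : ℂ)) ⊗ₖ avgState p D)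
        ↔ avgState p E = avgState p D)
    ∧ (SuppLe (cqState p D) (Matrix.diagonal (fun a => (p a : ℂ)) ⊗ₖ avgState p E) →
        qRel (cqState p D) (Matrix.diagonal (fun a => (p a : ℂ)) ⊗ₖ avgState p E)
          = qRel (cqState p D) (Matrix.diagonal (fun a => (p a : ℂ)) ⊗ₖ avgState p D)
            + qRel (avgState p D) (avgState p E)) := by
  obtain ⟨hp0, hp1⟩ := hp
  have hσpsd : (avgState p D).PosSemidef := avg_psd p D hp0 (fun a => (hD a).1)
  have hτpsd : (avgState p E).PosSemidef := avg_psd p E hp0 (fun a => (hE a).1)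
  have hσtr : (avgState p D).trace = 1 := avg_trace p D hp1 (fun a => (hD a).2)
  have hτtr : (avgState p E).trace = 1 := avg_trace p E hp1 (fun a => (hE a).2)
  set σ := avgState p D with hσdef
  set τ := avgState p E with hτdef
  set ρ := cqState p D with hρdef
  set U : Matrix (Fin d) (Fin d) ℂ := (hσpsd.1.eigenvectorUnitary : Matrix (Fin d) (Fin d) ℂ)
    with hUdef
  set lam : Fin d → ℝ := hσpsd.1.eigenvalues with hlamdef
  have hUspec : σ = U * Matrix.diagonal (fun i => (lam i : ℂ)) * Uᴴ := by
    have h := hσpsd.1.spectral_theorem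
    rw [h]; rfl
  have hUU : U * Uᴴ = 1 := by
    have := (Matrix.mem_unitaryGroup_iff).mp hσpsd.1.eigenvectorUnitary.2
    simpa [Matrix.star_eq_conjTranspose] using this
  have hU'U : Uᴴ * U = 1 := by
    have := (Matrix.mem_unitaryGroup_iff').mp hσpsd.1.eigenvectorUnitary.2
    simpa [Matrix.star_eq_conjTranspose] using this
  set V : Matrix (Fin d) (Fin d) ℂ := (hτpsd.1.eigenvectorUnitary : Matrix (Fin d) (Fin d) ℂ)
    with hVdef
  set mu : Fin d → ℝ := hτpsd.1.eigenvalues with hmudef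
  have hVspec : τ = V * Matrix.diagonal (fun i => (mu i : ℂ)) * Vᴴ := by
    have h := hτpsd.1.spectral_theorem
    rw [h]; rfl
  have hVV : V * Vᴴ = 1 := by
    have := (Matrix.mem_unitaryGroup_iff).mp hτpsd.1.eigenvectorUnitary.2
    simpa [Matrix.star_eq_conjTranspose] using this
  have hV'V : Vᴴ * V = 1 := by
    have := (Matrix.mem_unitaryGroup_iff').mp hτpsd.1.eigenvectorUnitary.2
    simpa [Matrix.star_eq_conjTranspose] using this
  have hlam0 : ∀ i, 0 ≤ lam i := hσpsd.eigenvalues_nonneg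
  have hmu0 : ∀ j, 0 ≤ mu j := hτpsd.eigenvalues_nonneg
  -- conjugated diagonals
  have hUσU : Uᴴ * σ * U = Matrix.diagonal (fun i => (lam i : ℂ)) := by
    rw [hUspec]
    calc Uᴴ * (U * Matrix.diagonal (fun i => (lam i : ℂ)) * Uᴴ) * U
        = (Uᴴ * U) * Matrix.diagonal (fun i => (lam i : ℂ)) * (Uᴴ * U) := by noncomm_ring
      _ = _ := by rw [hU'U, Matrix.one_mul, Matrix.mul_one]
  have hVτV : Vᴴ * τ * V = Matrix.diagonal (fun i => (mu i : ℂ)) := by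
    rw [hVspec]
    calc Vᴴ * (V * Matrix.diagonal (fun i => (mu i : ℂ)) * Vᴴ) * V
        = (Vᴴ * V) * Matrix.diagonal (fun i => (mu i : ℂ)) * (Vᴴ * V) := by noncomm_ring
      _ = _ := by rw [hV'V, Matrix.one_mul, Matrix.mul_one]
  -- eigenvalue sums
  have hlamsum : ∑ i, lam i = 1 := by
    have h1 : ∑ i, (Uᴴ * σ * U) i i = σ.trace := sum_diag_conj σ hUU
    rw [hUσU, hσtr] at h1
    have h2 : ∑ i, ((lam i : ℝ) : ℂ) = 1 := by
      rw [← h1]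
      exact Finset.sum_congr rfl fun i _ => by simp [Matrix.diagonal_apply]
    exact_mod_cast h2
  have hmusum : ∑ j, mu j = 1 := by
    have h1 : ∑ i, (Vᴴ * τ * V) i i = τ.trace := sum_diag_conj τ hVV
    rw [hVτV, hτtr] at h1
    have h2 : ∑ i, ((mu i : ℝ) : ℂ) = 1 := by
      rw [← h1]
      exact Finset.sum_congr rfl fun i _ => by simp [Matrix.diagonal_apply]
    exact_mod_cast h2
  -- c values
  set cσ : A → Fin d → ℝ := fun a i => ((Uᴴ * D a * U) i i).re with hcσdef
  set cτ : A → Fin d → ℝ := fun a j => ((Vᴴ * D a * V) j j).re with hcτdef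
  have hcσreal : ∀ a i, (Uᴴ * D a * U) i i = ((cσ a i : ℝ) : ℂ) :=
    fun a i => (psd_entry_real (hD a).1 U i).1
  have hcτreal : ∀ a j, (Vᴴ * D a * V) j j = ((cτ a j : ℝ) : ℂ) :=
    fun a j => (psd_entry_real (hD a).1 V j).1
  have hcσ0 : ∀ a i, 0 ≤ cσ a i := fun a i => (psd_entry_real (hD a).1 U i).2
  have hcτ0 : ∀ a j, 0 ≤ cτ a j := fun a j => (psd_entry_real (hD a).1 V j).2
  have hcσsum : ∀ a, ∑ i, cσ a i = 1 := by
    intro a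
    have h1 : ∑ i, (Uᴴ * D a * U) i i = (D a).trace := sum_diag_conj (D a) hUU
    rw [(hD a).2] at h1
    have h2 : ∑ i, ((cσ a i : ℝ) : ℂ) = 1 := by
      rw [← h1]; exact Finset.sum_congr rfl fun i _ => (hcσreal a i).symm
    exact_mod_cast h2
  have hcτsum : ∀ a, ∑ j, cτ a j = 1 := by
    intro a
    have h1 : ∑ j, (Vᴴ * D a * V) j j = (D a).trace := sum_diag_conj (D a) hVV
    rw [(hD a).2] at h1
    have h2 : ∑ j, ((cτ a j : ℝ) : ℂ) = 1 := by
      rw [← h1]; exact Finset.sum_congr rfl fun j _ => (hcτreal a j).symm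
    exact_mod_cast h2
  -- expansions of conjugated σ
  have hσexp : ∀ N : Matrix (Fin d) (Fin d) ℂ,
      Nᴴ * σ * N = ∑ a, (p a : ℂ) • (Nᴴ * D a * N) := by
    intro N
    rw [hσdef]
    unfold avgState
    rw [Finset.mul_sum, Finset.sum_mul]
    exact Finset.sum_congr rfl fun a _ => by rw [mul_smul_comm, smul_mul_assoc]
  have hlam_c : ∀ i, lam i = ∑ a, p a * cσ a i := by
    intro i
    have h1 := Matrix.ext_iff.mpr (hσexp U) i i
    rw [hUσU] at h1
    have h2 : ((lam i : ℝ) : ℂ) = ∑ a, ((p a * cσ a i : ℝ) : ℂ) := by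
      rw [show ((lam i : ℝ) : ℂ) = Matrix.diagonal (fun i => (lam i : ℂ)) i i by
        simp [Matrix.diagonal_apply], h1, Matrix.sum_apply]
      refine Finset.sum_congr rfl fun a _ => ?_
      rw [Matrix.smul_apply, hcσreal a i]
      push_cast; simp
    exact_mod_cast h2
  set sτ : Fin d → ℝ := fun j => ((Vᴴ * σ * V) j j).re with hsτdef
  have hsτreal : ∀ j, (Vᴴ * σ * V) j j = ((sτ j : ℝ) : ℂ) :=
    fun j => (psd_entry_real hσpsd V j).1
  have hsτ_c : ∀ j, sτ j = ∑ a, p a * cτ a j := by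
    intro j
    have h1 := Matrix.ext_iff.mpr (hσexp V) j j
    have h2 : ((sτ j : ℝ) : ℂ) = ∑ a, ((p a * cτ a j : ℝ) : ℂ) := by
      rw [← hsτreal j, h1, Matrix.sum_apply]
      refine Finset.sum_congr rfl fun a _ => ?_
      rw [Matrix.smul_apply, hcτreal a j]
      push_cast; simp
    exact_mod_cast h2
  -- W and P
  set W : Matrix (Fin d) (Fin d) ℂ := Uᴴ * V with hWdef
  have hWH : Wᴴ = Vᴴ * U := by
    rw [hWdef, Matrix.conjTranspose_mul, Matrix.conjTranspose_conjTranspose]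
  have hWW : W * Wᴴ = 1 := by
    rw [hWdef, hWH]
    calc Uᴴ * V * (Vᴴ * U) = Uᴴ * (V * Vᴴ) * U := by noncomm_ring
      _ = 1 := by rw [hVV, Matrix.mul_one, hU'U]
  have hWW' : Wᴴ * W = 1 := by
    rw [hWdef, hWH]
    calc Vᴴ * U * (Uᴴ * V) = Vᴴ * (U * Uᴴ) * V := by noncomm_ring
      _ = 1 := by rw [hUU, Matrix.mul_one, hV'V]
  set P : Fin d → Fin d → ℝ := fun i j => Complex.normSq (W i j) with hPdef
  have hP0 : ∀ i j, 0 ≤ P i j := fun i j => Complex.normSq_nonneg _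
  have hProw : ∀ i, ∑ j, P i j = 1 := by
    intro i
    have h1 := Matrix.ext_iff.mpr hWW i i
    rw [Matrix.mul_apply] at h1
    have h2 : ∑ j, ((P i j : ℝ) : ℂ) = 1 := by
      rw [show (1:ℂ) = (1 : Matrix (Fin d) (Fin d) ℂ) i i by simp, ← h1]
      refine Finset.sum_congr rfl fun j _ => ?_
      rw [Matrix.conjTranspose_apply, Complex.star_def, Complex.mul_conj]
    exact_mod_cast h2
  have hPcol : ∀ j, ∑ i, P i j = 1 := by
    intro j
    have h1 := Matrix.ext_iff.mpr hWW' j j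
    rw [Matrix.mul_apply] at h1
    have h2 : ∑ i, ((P i j : ℝ) : ℂ) = 1 := by
      rw [show (1:ℂ) = (1 : Matrix (Fin d) (Fin d) ℂ) j j by simp, ← h1]
      refine Finset.sum_congr rfl fun i _ => ?_
      rw [Matrix.conjTranspose_apply, Complex.star_def, mul_comm, Complex.mul_conj]
    exact_mod_cast h2
  have hVσV : Vᴴ * σ * V = Wᴴ * Matrix.diagonal (fun i => (lam i : ℂ)) * W := by
    rw [hUspec, hWdef, hWH]
    noncomm_ring
  have hsτP : ∀ j, sτ j = ∑ i, lam i * P i j := by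
    intro j
    have h1 : ((sτ j : ℝ) : ℂ) = ∑ i, ((lam i * P i j : ℝ) : ℂ) := by
      rw [← hsτreal j, Matrix.ext_iff.mpr hVσV j j, conj_diag_entry]
      refine Finset.sum_congr rfl fun i _ => ?_
      rw [hPdef]; push_cast; ring
    exact_mod_cast h1
  -- trace computations
  have hE3 : (σ * matLog σ).trace.re = ∑ i, lam i * Real.logb 2 (lam i) := by
    have hlog : matLog σ = U * Matrix.diagonal (fun i => ((Real.logb 2 (lam i) : ℝ) : ℂ)) * Uᴴ :=
      matFun_spectral (Real.logb 2) hUU hU'U hUspec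
    rw [hlog, trace_conj_diag]
    have h1 : ∑ i, ((Real.logb 2 (lam i) : ℝ) : ℂ) * (Uᴴ * σ * U) i i
        = ((∑ i, lam i * Real.logb 2 (lam i) : ℝ) : ℂ) := by
      rw [hUσU]
      push_cast
      refine Finset.sum_congr rfl fun i _ => ?_
      rw [Matrix.diagonal_apply_eq]
      ring
    rw [h1, Complex.ofReal_re]
  have hE4 : (σ * matLog τ).trace.re = ∑ j, sτ j * Real.logb 2 (mu j) := by
    have hlog : matLog τ = V * Matrix.diagonal (fun j => ((Real.logb 2 (mu j) : ℝ) : ℂ)) * Vᴴ :=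
      matFun_spectral (Real.logb 2) hVV hV'V hVspec
    rw [hlog, trace_conj_diag]
    have h1 : ∑ j, ((Real.logb 2 (mu j) : ℝ) : ℂ) * (Vᴴ * σ * V) j j
        = ((∑ j, sτ j * Real.logb 2 (mu j) : ℝ) : ℂ) := by
      push_cast
      refine Finset.sum_congr rfl fun j _ => ?_
      rw [hsτreal j]
      push_cast
      ring
    rw [h1, Complex.ofReal_re]
  have hE1 : (ρ * matLog (Matrix.diagonal (fun a => (p a : ℂ)) ⊗ₖ τ)).trace.re
      = ∑ a, ∑ j, (p a * cτ a j) * Real.logb 2 (p a * mu j) := by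
    rw [hρdef]
    exact trace_cq_matLog p D (fun a => (hD a).1) hVV hV'V hVspec
  have hE2 : (ρ * matLog (Matrix.diagonal (fun a => (p a : ℂ)) ⊗ₖ σ)).trace.re
      = ∑ a, ∑ i, (p a * cσ a i) * Real.logb 2 (p a * lam i) := by
    rw [hρdef]
    exact trace_cq_matLog p D (fun a => (hD a).1) hUU hU'U hUspec
  -- zero lemma for σ side
  have hZ1 : ∀ a i, 0 < p a → lam i = 0 → cσ a i = 0 := by
    intro a i hpa hli
    have h0 : ∑ b, p b * cσ b i = 0 := by rw [← hlam_c i, hli]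
    have hterm := (Finset.sum_eq_zero_iff_of_nonneg
      (fun b _ => mul_nonneg (hp0 b) (hcσ0 b i))).mp h0 a (Finset.mem_univ a)
    have := mul_eq_zero.mp hterm
    rcases this with h | h
    · exact absurd h (ne_of_gt hpa)
    · exact h
  -- C1 claim
  have hC1 : ∑ a, ∑ i, (p a * cσ a i) * Real.logb 2 (p a * lam i)
      = ∑ a, p a * Real.logb 2 (p a) + ∑ i, lam i * Real.logb 2 (lam i) := by
    have hpt : ∀ a i, (p a * cσ a i) * Real.logb 2 (p a * lam i)
        = p a * cσ a i * Real.logb 2 (p a) + p a * cσ a i * Real.logb 2 (lam i) := by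
      intro a i
      rcases eq_or_lt_of_le (hp0 a) with h0 | h0
      · rw [← h0]; ring_nf
      · rcases eq_or_lt_of_le (hlam0 i) with h1 | h1
        · rw [← h1, hZ1 a i h0 h1.symm]; ring_nf
        · rw [Real.logb_mul (ne_of_gt h0) (ne_of_gt h1)]; ring
    calc ∑ a, ∑ i, (p a * cσ a i) * Real.logb 2 (p a * lam i)
        = ∑ a, ∑ i, (p a * cσ a i * Real.logb 2 (p a) + p a * cσ a i * Real.logb 2 (lam i)) :=
          Finset.sum_congr rfl fun a _ => Finset.sum_congr rfl fun i _ => hpt a i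
      _ = (∑ a, ∑ i, p a * cσ a i * Real.logb 2 (p a))
            + (∑ a, ∑ i, p a * cσ a i * Real.logb 2 (lam i)) := by
          rw [← Finset.sum_add_distrib]
          exact Finset.sum_congr rfl fun a _ => Finset.sum_add_distrib
      _ = ∑ a, (p a * Real.logb 2 (p a)) * (∑ i, cσ a i)
            + ∑ i, (Real.logb 2 (lam i)) * (∑ a, p a * cσ a i) := by
          refine congrArg₂ (· + ·) ?_ ?_
          · refine Finset.sum_congr rfl fun a _ => ?_
            rw [Finset.mul_sum]
            exact Finset.sum_congr rfl fun i _ => by ring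
          · rw [Finset.sum_comm]
            refine Finset.sum_congr rfl fun i _ => ?_
            rw [Finset.mul_sum]
            exact Finset.sum_congr rfl fun a _ => by ring
      _ = ∑ a, p a * Real.logb 2 (p a) + ∑ i, lam i * Real.logb 2 (lam i) := by
          refine congrArg₂ (· + ·) ?_ ?_
          · exact Finset.sum_congr rfl fun a _ => by rw [hcσsum a, mul_one]
          · exact Finset.sum_congr rfl fun i _ => by rw [← hlam_c i]; ring
  -- SuppLe-dependent facts
  have hDav : SuppLe ρ (Matrix.diagonal (fun a => (p a : ℂ)) ⊗ₖ τ) →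
      ∀ j, mu j = 0 → ∀ a, 0 < p a → (D a).mulVec (fun k => V k j) = 0 := by
    intro hS j hj a hpa
    have hτv : τ.mulVec (fun k => V k j) = 0 := by
      rw [mulVec_col hV'V hVspec j]
      funext k
      rw [hj]
      simp
    set w : A × Fin d → ℂ := fun x => V x.2 j with hwdef
    have hχw : (Matrix.diagonal (fun a => (p a : ℂ)) ⊗ₖ τ).mulVec w = 0 := by
      funext x
      obtain ⟨b, i⟩ := x
      have : (fun k => w (b, k)) = fun k => V k j := rfl
      rw [Pi.zero_apply, chi_mulVec, this, hτv, Pi.zero_apply, mul_zero]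
    have hρw := hS w hχw
    have h1 := congrFun hρw
    funext i
    have h2 := h1 (a, i)
    rw [Pi.zero_apply, hρdef, cq_mulVec] at h2
    have : (fun k => w (a, k)) = fun k => V k j := rfl
    rw [this] at h2
    rcases mul_eq_zero.mp h2 with h | h
    · exact absurd (by exact_mod_cast h) (ne_of_gt hpa)
    · rw [Pi.zero_apply]
      exact h
  have hcτzero : SuppLe ρ (Matrix.diagonal (fun a => (p a : ℂ)) ⊗ₖ τ) →
      ∀ a j, 0 < p a → mu j = 0 → cτ a j = 0 := by
    intro hS a j hpa hj
    have hD0 := hDav hS j hj a hpa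
    have h : (Vᴴ * D a * V) j j = 0 := by
      rw [conj_entry, hD0, dotProduct_zero]
    show ((Vᴴ * D a * V) j j).re = 0
    rw [h]
    simp
  have hσv0 : SuppLe ρ (Matrix.diagonal (fun a => (p a : ℂ)) ⊗ₖ τ) →
      ∀ j, mu j = 0 → σ.mulVec (fun k => V k j) = 0 := by
    intro hS j hj
    rw [hσdef]
    unfold avgState
    rw [sum_mulVec']
    apply Finset.sum_eq_zero
    intro a _
    rw [Matrix.smul_mulVec]
    rcases eq_or_lt_of_le (hp0 a) with h0 | h0
    · rw [← h0]
      simp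
    · rw [hDav hS j hj a h0]
      simp
  have hlamP : SuppLe ρ (Matrix.diagonal (fun a => (p a : ℂ)) ⊗ₖ τ) →
      ∀ i j, mu j = 0 → lam i * P i j = 0 := by
    intro hS i j hj
    have hcol : ∀ k, (σ * V) k j = 0 := by
      intro k
      rw [col_mul_entry]
      exact congrFun (hσv0 hS j hj) k
    have h1 : (Uᴴ * (σ * V)) i j = 0 := by
      rw [Matrix.mul_apply]
      apply Finset.sum_eq_zero
      intro k _
      rw [hcol k, mul_zero]
    have h2 : Uᴴ * (σ * V) = Matrix.diagonal (fun i => (lam i : ℂ)) * W := by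
      rw [← Matrix.mul_assoc, hUspec, hWdef]
      calc Uᴴ * (U * Matrix.diagonal (fun i => (lam i : ℂ)) * Uᴴ) * V
          = (Uᴴ * U) * Matrix.diagonal (fun i => (lam i : ℂ)) * (Uᴴ * V) := by noncomm_ring
        _ = Matrix.diagonal (fun i => (lam i : ℂ)) * (Uᴴ * V) := by
            rw [hU'U, Matrix.one_mul]
    have h3 : (lam i : ℂ) * W i j = 0 := by
      calc (lam i : ℂ) * W i j
          = (Matrix.diagonal (fun i => (lam i : ℂ)) * W) i j := by rw [Matrix.diagonal_mul]
        _ = (Uᴴ * (σ * V)) i j := by rw [h2]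
        _ = 0 := h1
    rcases mul_eq_zero.mp h3 with h | h
    · have : lam i = 0 := by exact_mod_cast h
      rw [this, zero_mul]
    · have : P i j = 0 := by
        show Complex.normSq (W i j) = 0
        rw [h]
        simp
      rw [this, mul_zero]
  -- C2 claim
  have hC2 : SuppLe ρ (Matrix.diagonal (fun a => (p a : ℂ)) ⊗ₖ τ) →
      ∑ a, ∑ j, (p a * cτ a j) * Real.logb 2 (p a * mu j)
        = ∑ a, p a * Real.logb 2 (p a) + ∑ j, sτ j * Real.logb 2 (mu j) := by
    intro hS
    have hpt : ∀ a j, (p a * cτ a j) * Real.logb 2 (p a * mu j)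
        = p a * cτ a j * Real.logb 2 (p a) + p a * cτ a j * Real.logb 2 (mu j) := by
      intro a j
      rcases eq_or_lt_of_le (hp0 a) with h0 | h0
      · rw [← h0]; ring_nf
      · rcases eq_or_lt_of_le (hmu0 j) with h1 | h1
        · rw [← h1, hcτzero hS a j h0 h1.symm]; ring_nf
        · rw [Real.logb_mul (ne_of_gt h0) (ne_of_gt h1)]; ring
    calc ∑ a, ∑ j, (p a * cτ a j) * Real.logb 2 (p a * mu j)
        = ∑ a, ∑ j, (p a * cτ a j * Real.logb 2 (p a) + p a * cτ a j * Real.logb 2 (mu j)) :=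
          Finset.sum_congr rfl fun a _ => Finset.sum_congr rfl fun j _ => hpt a j
      _ = (∑ a, ∑ j, p a * cτ a j * Real.logb 2 (p a))
            + (∑ a, ∑ j, p a * cτ a j * Real.logb 2 (mu j)) := by
          rw [← Finset.sum_add_distrib]
          exact Finset.sum_congr rfl fun a _ => Finset.sum_add_distrib
      _ = ∑ a, (p a * Real.logb 2 (p a)) * (∑ j, cτ a j)
            + ∑ j, (Real.logb 2 (mu j)) * (∑ a, p a * cτ a j) := by
          refine congrArg₂ (· + ·) ?_ ?_
          · refine Finset.sum_congr rfl fun a _ => ?_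
            rw [Finset.mul_sum]
            exact Finset.sum_congr rfl fun j _ => by ring
          · rw [Finset.sum_comm]
            refine Finset.sum_congr rfl fun j _ => ?_
            rw [Finset.mul_sum]
            exact Finset.sum_congr rfl fun a _ => by ring
      _ = ∑ a, p a * Real.logb 2 (p a) + ∑ j, sτ j * Real.logb 2 (mu j) := by
          refine congrArg₂ (· + ·) ?_ ?_
          · exact Finset.sum_congr rfl fun a _ => by rw [hcτsum a, mul_one]
          · exact Finset.sum_congr rfl fun j _ => by rw [← hsτ_c j]; ring
  -- the identity (part 3)
  have hID : SuppLe ρ (Matrix.diagonal (fun a => (p a : ℂ)) ⊗ₖ τ) →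
      qRel ρ (Matrix.diagonal (fun a => (p a : ℂ)) ⊗ₖ τ)
        = qRel ρ (Matrix.diagonal (fun a => (p a : ℂ)) ⊗ₖ σ) + qRel σ τ := by
    intro hS
    unfold qRel
    rw [Complex.sub_re, Complex.sub_re, Complex.sub_re]
    rw [hE1, hE2, hE3, hE4, hC1, hC2 hS]
    ring
  -- S1 : support of rho is inside chi_sigma
  have hS1 : SuppLe ρ (Matrix.diagonal (fun a => (p a : ℂ)) ⊗ₖ σ) := by
    intro w hw
    funext x
    obtain ⟨a, i⟩ := x
    rw [Pi.zero_apply, hρdef, cq_mulVec]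
    rcases eq_or_lt_of_le (hp0 a) with h0 | h0
    · rw [show ((p a : ℝ) : ℂ) = 0 by rw [← h0]; simp, zero_mul]
    · set wa : Fin d → ℂ := fun k => w (a, k) with hwadef
      have hσwa : σ.mulVec wa = 0 := by
        funext k
        have hk := congrFun hw (a, k)
        rw [Pi.zero_apply, chi_mulVec] at hk
        rcases mul_eq_zero.mp hk with h | h
        · exact absurd (by exact_mod_cast h) (ne_of_gt h0)
        · rw [Pi.zero_apply]; exact h
      have htb : ∀ b, (star wa ⬝ᵥ (D b).mulVec wa)
          = (((star wa ⬝ᵥ (D b).mulVec wa).re : ℝ) : ℂ)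
          ∧ 0 ≤ (star wa ⬝ᵥ (D b).mulVec wa).re := by
        intro b
        have hb := (hD b).1.dotProduct_mulVec_nonneg wa
        rw [Complex.le_def] at hb
        constructor
        · apply Complex.ext <;> simp [← hb.2]
        · simpa using hb.1
      have hsum : ∑ b, (p b : ℂ) * (star wa ⬝ᵥ (D b).mulVec wa) = 0 := by
        calc ∑ b, (p b : ℂ) * (star wa ⬝ᵥ (D b).mulVec wa)
            = star wa ⬝ᵥ σ.mulVec wa := by
              rw [hσdef]
              unfold avgState
              rw [sum_mulVec', dot_sum]
              refine Finset.sum_congr rfl fun b _ => ?_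
              rw [Matrix.smul_mulVec, dotProduct_smul, smul_eq_mul]
          _ = 0 := by rw [hσwa, dotProduct_zero]
      have hre : ∑ b, p b * (star wa ⬝ᵥ (D b).mulVec wa).re = 0 := by
        have h2 : ∑ b, (p b : ℂ) * (star wa ⬝ᵥ (D b).mulVec wa)
            = ((∑ b, p b * (star wa ⬝ᵥ (D b).mulVec wa).re : ℝ) : ℂ) := by
          push_cast
          refine Finset.sum_congr rfl fun b _ => ?_
          rw [(htb b).1, Complex.ofReal_re]
        rw [h2] at hsum
        exact_mod_cast hsum
      have hta := (Finset.sum_eq_zero_iff_of_nonneg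
        (fun b _ => mul_nonneg (hp0 b) (htb b).2)).mp hre a (Finset.mem_univ a)
      have hta0 : (star wa ⬝ᵥ (D a).mulVec wa).re = 0 := by
        rcases mul_eq_zero.mp hta with h | h
        · exact absurd h (ne_of_gt h0)
        · exact h
      have htaC : star wa ⬝ᵥ (D a).mulVec wa = 0 := by
        rw [(htb a).1, hta0]
        simp
      have hDwa : (D a).mulVec wa = 0 := ((hD a).1.dotProduct_mulVec_zero_iff wa).mp htaC
      rw [hDwa, Pi.zero_apply, mul_zero]
  -- Gibbs inputs
  have hq0 : ∀ x : Fin d × Fin d, 0 ≤ lam x.1 * P x.1 x.2 :=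
    fun x => mul_nonneg (hlam0 _) (hP0 _ _)
  have hs0 : ∀ x : Fin d × Fin d, 0 ≤ mu x.2 * P x.1 x.2 :=
    fun x => mul_nonneg (hmu0 _) (hP0 _ _)
  have hqsum : ∑ x : Fin d × Fin d, lam x.1 * P x.1 x.2 = 1 := by
    rw [Fintype.sum_prod_type]
    refine Eq.trans (Finset.sum_congr rfl fun i _ => ?_) hlamsum
    show ∑ j, lam i * P i j = lam i
    rw [← Finset.mul_sum, hProw i, mul_one]
  have hssum : ∑ x : Fin d × Fin d, mu x.2 * P x.1 x.2 = 1 := by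
    rw [Fintype.sum_prod_type, Finset.sum_comm]
    refine Eq.trans (Finset.sum_congr rfl fun j _ => ?_) hmusum
    show ∑ i, mu j * P i j = mu j
    rw [← Finset.mul_sum, hPcol j, mul_one]
  have hqs : SuppLe ρ (Matrix.diagonal (fun a => (p a : ℂ)) ⊗ₖ τ) →
      ∀ x : Fin d × Fin d, 0 < lam x.1 * P x.1 x.2 → 0 < mu x.2 * P x.1 x.2 := by
    intro hS x hx
    obtain ⟨i, j⟩ := x
    have hPpos : 0 < P i j := by
      rcases eq_or_lt_of_le (hP0 i j) with h | h
      · exfalso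
        rw [← h, mul_zero] at hx
        exact lt_irrefl 0 hx
      · exact h
    have hmuj : 0 < mu j := by
      rcases eq_or_lt_of_le (hmu0 j) with h | h
      · exact absurd (hlamP hS i j h.symm) (ne_of_gt hx)
      · exact h
    exact mul_pos hmuj hPpos
  have hGibbs : SuppLe ρ (Matrix.diagonal (fun a => (p a : ℂ)) ⊗ₖ τ) →
      0 ≤ (∑ x : Fin d × Fin d, ((lam x.1 * P x.1 x.2) * Real.logb 2 (lam x.1 * P x.1 x.2)
            - (lam x.1 * P x.1 x.2) * Real.logb 2 (mu x.2 * P x.1 x.2)))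
      ∧ ((∑ x : Fin d × Fin d, ((lam x.1 * P x.1 x.2) * Real.logb 2 (lam x.1 * P x.1 x.2)
            - (lam x.1 * P x.1 x.2) * Real.logb 2 (mu x.2 * P x.1 x.2))) = 0
          ↔ (fun x : Fin d × Fin d => lam x.1 * P x.1 x.2)
            = (fun x : Fin d × Fin d => mu x.2 * P x.1 x.2)) :=
    fun hS => gibbs (fun x : Fin d × Fin d => lam x.1 * P x.1 x.2)
      (fun x : Fin d × Fin d => mu x.2 * P x.1 x.2) hq0 hs0
      (hqsum.trans hssum.symm) (hqs hS)
  -- qRel sigma tau as a classical relative entropy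
  have hQRel : qRel σ τ = ∑ i, lam i * Real.logb 2 (lam i) - ∑ j, sτ j * Real.logb 2 (mu j) := by
    unfold qRel
    rw [Complex.sub_re, hE3, hE4]
  have hqrel_eq : SuppLe ρ (Matrix.diagonal (fun a => (p a : ℂ)) ⊗ₖ τ) →
      qRel σ τ = ∑ x : Fin d × Fin d, ((lam x.1 * P x.1 x.2) * Real.logb 2 (lam x.1 * P x.1 x.2)
        - (lam x.1 * P x.1 x.2) * Real.logb 2 (mu x.2 * P x.1 x.2)) := by
    intro hS
    rw [hQRel]
    have h1 : ∑ i, lam i * Real.logb 2 (lam i)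
        = ∑ x : Fin d × Fin d, P x.1 x.2 * (lam x.1 * Real.logb 2 (lam x.1)) := by
      rw [Fintype.sum_prod_type]
      refine Finset.sum_congr rfl fun i _ => ?_
      show lam i * Real.logb 2 (lam i) = ∑ j, P i j * (lam i * Real.logb 2 (lam i))
      rw [← Finset.sum_mul, hProw i, one_mul]
    have h2 : ∑ j, sτ j * Real.logb 2 (mu j)
        = ∑ x : Fin d × Fin d, (lam x.1 * P x.1 x.2) * Real.logb 2 (mu x.2) := by
      rw [Fintype.sum_prod_type, Finset.sum_comm]
      refine Finset.sum_congr rfl fun j _ => ?_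
      show sτ j * Real.logb 2 (mu j) = ∑ i, (lam i * P i j) * Real.logb 2 (mu j)
      rw [hsτP j, Finset.sum_mul]
    rw [h1, h2, ← Finset.sum_sub_distrib]
    refine Finset.sum_congr rfl fun x _ => ?_
    obtain ⟨i, j⟩ := x
    show P i j * (lam i * Real.logb 2 (lam i)) - (lam i * P i j) * Real.logb 2 (mu j)
        = (lam i * P i j) * Real.logb 2 (lam i * P i j)
          - (lam i * P i j) * Real.logb 2 (mu j * P i j)
    rcases eq_or_lt_of_le (hP0 i j) with hP | hP
    · rw [← hP]
      simp
    · rcases eq_or_lt_of_le (hlam0 i) with hl | hl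
      · rw [← hl]
        simp
      · have hmuj : 0 < mu j := by
          rcases eq_or_lt_of_le (hmu0 j) with h | h
          · exfalso
            have := hlamP hS i j h.symm
            nlinarith
          · exact h
        rw [Real.logb_mul (ne_of_gt hl) (ne_of_gt hP),
          Real.logb_mul (ne_of_gt hmuj) (ne_of_gt hP)]
        ring
  -- equality implies tau = sigma
  have hfinal : ((fun x : Fin d × Fin d => lam x.1 * P x.1 x.2)
      = (fun x : Fin d × Fin d => mu x.2 * P x.1 x.2)) → τ = σ := by
    intro hqs'
    have hWc : Matrix.diagonal (fun i => (lam i : ℂ)) * W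
        = W * Matrix.diagonal (fun j => (mu j : ℂ)) := by
      ext i j
      rw [Matrix.diagonal_mul, Matrix.mul_diagonal]
      rcases eq_or_ne (W i j) 0 with h | h
      · rw [h, mul_zero, zero_mul]
      · have hPne : P i j ≠ 0 := fun hc => h (Complex.normSq_eq_zero.mp hc)
        have hx := congrFun hqs' (i, j)
        simp only at hx
        have hlm : lam i = mu j := mul_right_cancel₀ hPne hx
        rw [hlm, mul_comm]
    have hV_UW : V = U * W := by
      rw [hWdef]
      calc V = (U * Uᴴ) * V := by rw [hUU, Matrix.one_mul]
        _ = U * (Uᴴ * V) := by rw [Matrix.mul_assoc]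
    calc τ = V * Matrix.diagonal (fun j => (mu j : ℂ)) * Vᴴ := hVspec
      _ = (U * W) * Matrix.diagonal (fun j => (mu j : ℂ)) * (U * W)ᴴ := by rw [← hV_UW]
      _ = U * (W * Matrix.diagonal (fun j => (mu j : ℂ)) * Wᴴ) * Uᴴ := by
          rw [Matrix.conjTranspose_mul]
          noncomm_ring
      _ = U * (Matrix.diagonal (fun i => (lam i : ℂ)) * (W * Wᴴ)) * Uᴴ := by
          rw [← hWc, Matrix.mul_assoc (Matrix.diagonal fun i => (lam i : ℂ)) W Wᴴ]
      _ = U * Matrix.diagonal (fun i => (lam i : ℂ)) * Uᴴ := by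
          rw [hWW, Matrix.mul_one]
      _ = σ := hUspec.symm
  have hqrelself : τ = σ → qRel σ τ = 0 := by
    intro h
    rw [h]
    unfold qRel
    rw [sub_self]
    simp
  -- assemble
  refine ⟨?_, ?_, hID⟩
  · by_cases hS : SuppLe ρ (Matrix.diagonal (fun a => (p a : ℂ)) ⊗ₖ τ)
    · unfold qRelE
      rw [if_pos hS, if_pos hS1]
      apply EReal.coe_le_coe_iff.mpr
      have h0 : 0 ≤ qRel σ τ := by
        rw [hqrel_eq hS]
        exact (hGibbs hS).1
      rw [hID hS]
      linarith
    · unfold qRelE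
      rw [if_neg hS]
      exact le_top
  · constructor
    · intro h
      by_cases hS : SuppLe ρ (Matrix.diagonal (fun a => (p a : ℂ)) ⊗ₖ τ)
      · unfold qRelE at h
        rw [if_pos hS, if_pos hS1] at h
        have heq : qRel ρ (Matrix.diagonal (fun a => (p a : ℂ)) ⊗ₖ τ)
            = qRel ρ (Matrix.diagonal (fun a => (p a : ℂ)) ⊗ₖ σ) := by exact_mod_cast h
        have h0 : qRel σ τ = 0 := by
          rw [hID hS] at heq
          linarith
        exact hfinal (((hGibbs hS).2).mp (by rw [← hqrel_eq hS]; exact h0))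
      · unfold qRelE at h
        rw [if_neg hS, if_pos hS1] at h
        exact absurd h.symm (EReal.coe_ne_top _)
    · intro h
      rw [h]
end

section
/- Let ρ, σ be density operators on a finite-dimensional Hilbert space K with S(ρ||σ) < ∞, and let P be a projection on K satisfying tr(ρP) ≥ 1 − τ₁ and tr(σP) ≤ 2^{−(S₀ − τ₂)} for some S₀ ≥ 0, τ₁ ∈ [0,1], τ₂ ≥ 0. Then for the two-outcome measurement M = {P, 1−P}, the classical relative entropy S_M(ρ||σ) := D((tr(ρP), 1−tr(ρP)) || (tr(σP), 1−tr(σP))) satisfies S_M(ρ||σ) ≥ −1 + (1−τ₁)(S₀ − τ₂) − τ₁ · (−log λ_min(σ)) provided σ is invertible with smallest eigenvalue λ_min(σ). -/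
open Matrix Kronecker BigOperators
open scoped ComplexOrder
open Classical

/-- binary Kullback-Leibler divergence (base 2). -/
noncomputable def klBin (x y : ℝ) : ℝ :=
  x * Real.logb 2 (x / y) + (1 - x) * Real.logb 2 ((1 - x) / (1 - y))



lemma psd_trace_re_nonneg {n : Type*} [Fintype n] [DecidableEq n] {M : Matrix n n ℂ}
    (hM : M.PosSemidef) : 0 ≤ M.trace.re := by
  have h : ∀ i, 0 ≤ (M i i).re := by
    intro i
    have h0 := hM.dotProduct_mulVec_nonneg (Pi.single i 1)
    have : star (Pi.single i 1) ⬝ᵥ M *ᵥ Pi.single i 1 = M i i := by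
      simp [Matrix.mulVec_single, dotProduct, Pi.single_apply]
    rw [this] at h0
    exact (Complex.le_def.mp h0).1
  rw [Matrix.trace, Complex.re_sum]
  exact Finset.sum_nonneg fun i _ => h i

lemma trace_mul_psd_nonneg {n : Type*} [Fintype n] [DecidableEq n] {A B : Matrix n n ℂ}
    (hA : A.PosSemidef) (hB : B.PosSemidef) : 0 ≤ (A * B).trace.re := by
  open scoped MatrixOrder Matrix.Norms.L2Operator in
  obtain ⟨C, hC⟩ := CStarAlgebra.nonneg_iff_eq_star_mul_self.mp hB.nonneg
  rw [Matrix.star_eq_conjTranspose] at hC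
  subst hC
  have : (A * (Cᴴ * C)).trace = (C * A * Cᴴ).trace := by
    rw [← Matrix.mul_assoc, Matrix.trace_mul_cycle]
  rw [this]
  exact psd_trace_re_nonneg (hA.mul_mul_conjTranspose_same C)

lemma conj_spectral {n : Type*} [Fintype n] [DecidableEq n] {A : Matrix n n ℂ}
    (hA : A.IsHermitian) (c : ℝ) :
    A - (c : ℂ) • 1 = (hA.eigenvectorUnitary : Matrix n n ℂ) *
      Matrix.diagonal (fun i => ((hA.eigenvalues i - c : ℝ) : ℂ)) *
      star (hA.eigenvectorUnitary : Matrix n n ℂ) := by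
  have hU : (hA.eigenvectorUnitary : Matrix n n ℂ) * star (hA.eigenvectorUnitary : Matrix n n ℂ) = 1 :=
    Matrix.mem_unitaryGroup_iff.mp hA.eigenvectorUnitary.2
  have hd : Matrix.diagonal (fun i => ((hA.eigenvalues i - c : ℝ) : ℂ))
      = Matrix.diagonal ((fun x : ℝ => (x:ℂ)) ∘ hA.eigenvalues) - (c:ℂ) • 1 := by
    rw [Matrix.smul_one_eq_diagonal, Matrix.diagonal_sub]
    congr 1
    ext i
    push_cast
    simp
  conv_lhs => rw [hA.spectral_theorem]
  rw [hd, Matrix.mul_sub, Matrix.sub_mul, Matrix.mul_smul, Matrix.smul_mul, Matrix.mul_one, hU]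
  norm_num

lemma psd_sub_smul {n : Type*} [Fintype n] [DecidableEq n] {A : Matrix n n ℂ}
    (hA : A.IsHermitian) (c : ℝ) (h : ∀ i, c ≤ hA.eigenvalues i) :
    (A - (c : ℂ) • 1).PosSemidef := by
  rw [conj_spectral hA c]
  refine (Matrix.posSemidef_diagonal_iff.mpr ?_).mul_mul_conjTranspose_same _
  intro i
  rw [Complex.zero_le_real]
  linarith [h i]

lemma trace_eq_sum_ev {n : Type*} [Fintype n] [DecidableEq n] {A : Matrix n n ℂ}
    (hA : A.IsHermitian) : A.trace = ∑ i, (hA.eigenvalues i : ℂ) := by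
  have hU : star (hA.eigenvectorUnitary : Matrix n n ℂ) * (hA.eigenvectorUnitary : Matrix n n ℂ) = 1 :=
    Matrix.mem_unitaryGroup_iff'.mp hA.eigenvectorUnitary.2
  conv_lhs => rw [hA.spectral_theorem]
  rw [Unitary.conjStarAlgAut_apply, Matrix.trace_mul_cycle, hU, Matrix.one_mul, Matrix.trace_diagonal]
  rfl


lemma psd_smul_sub {n : Type*} [Fintype n] [DecidableEq n] {A : Matrix n n ℂ}
    (hA : A.IsHermitian) (c : ℝ) (h : ∀ i, hA.eigenvalues i ≤ c) :
    ((c : ℂ) • 1 - A).PosSemidef := by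
  have key : (c : ℂ) • 1 - A = (hA.eigenvectorUnitary : Matrix n n ℂ) *
      Matrix.diagonal (fun i => ((c - hA.eigenvalues i : ℝ) : ℂ)) *
      star (hA.eigenvectorUnitary : Matrix n n ℂ) := by
    have hd : Matrix.diagonal (fun i => ((c - hA.eigenvalues i : ℝ) : ℂ))
        = -Matrix.diagonal (fun i => ((hA.eigenvalues i - c : ℝ) : ℂ)) := by
      ext i j
      by_cases hij : i = j <;>
        simp [Matrix.diagonal_apply, hij] <;> push_cast <;> ring
    rw [hd, Matrix.mul_neg, Matrix.neg_mul, ← conj_spectral hA c, neg_sub]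
  rw [key]
  refine (Matrix.posSemidef_diagonal_iff.mpr ?_).mul_mul_conjTranspose_same _
  intro i
  rw [Complex.zero_le_real]
  linarith [h i]

lemma herm_proj_psd {n : Type*} [Fintype n] [DecidableEq n] {P : Matrix n n ℂ}
    (h1 : P.IsHermitian) (h2 : P * P = P) : P.PosSemidef := by
  have : Pᴴ * P = P := by rw [h1.eq, h2]
  exact this ▸ Matrix.posSemidef_conjTranspose_mul_self P


lemma ent_ge (x : ℝ) (hx0 : 0 ≤ x) (hx1 : x ≤ 1) :
    -1 ≤ x * Real.logb 2 x + (1 - x) * Real.logb 2 (1 - x) := by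
  rcases eq_or_lt_of_le hx0 with rfl | hx0'
  · simp
  rcases eq_or_lt_of_le hx1 with rfl | hx1'
  · simp
  have hu : (0:ℝ) < 1 - x := by linarith
  have hL : (0:ℝ) < Real.log 2 := Real.log_pos (by norm_num)
  have l1 : Real.log (1/(2*x)) ≤ 1/(2*x) - 1 := Real.log_le_sub_one_of_pos (by positivity)
  have l2 : Real.log (1/(2*(1-x))) ≤ 1/(2*(1-x)) - 1 := Real.log_le_sub_one_of_pos (by positivity)
  rw [one_div, Real.log_inv] at l1 l2
  rw [Real.log_mul (by norm_num) hx0'.ne'] at l1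
  rw [Real.log_mul (by norm_num) hu.ne'] at l2
  have e1 : 2*x*(2*x)⁻¹ = 1 := by field_simp
  have e2 : (2*(1-x))*(2*(1-x))⁻¹ = 1 := by field_simp
  have k1 := mul_le_mul_of_nonneg_left l1 (by positivity : (0:ℝ) ≤ 2*x)
  have k2 := mul_le_mul_of_nonneg_left l2 (by positivity : (0:ℝ) ≤ 2*(1-x))
  have key : -Real.log 2 ≤ x * Real.log x + (1-x) * Real.log (1-x) := by nlinarith
  have : x * Real.logb 2 x + (1 - x) * Real.logb 2 (1 - x)
      = (x * Real.log x + (1-x) * Real.log (1-x)) / Real.log 2 := by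
    unfold Real.logb; ring
  rw [this, le_div_iff₀ hL]
  nlinarith

lemma klBin_lower (x y lam S₀ τ₁ τ₂ : ℝ) (hx0 : 0 ≤ x) (hx1 : x ≤ 1) (hy0 : 0 ≤ y) (hy1 : y ≤ 1)
    (hlam0 : 0 < lam) (hlam1 : lam ≤ 1) (hyx : lam * x ≤ y)
    (ht0 : 0 ≤ τ₁) (ht1 : τ₁ ≤ 1) (h1 : 1 - τ₁ ≤ x) (h2 : y ≤ (2:ℝ) ^ (-(S₀ - τ₂))) :
    -1 + (1 - τ₁) * (S₀ - τ₂) - τ₁ * (-(Real.logb 2 lam))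
      ≤ x * Real.logb 2 (x / y) + (1 - x) * Real.logb 2 ((1 - x) / (1 - y)) := by
  have hb : (1:ℝ) < 2 := by norm_num
  have hlogl : Real.logb 2 lam ≤ 0 := Real.logb_nonpos hb hlam0.le hlam1
  rcases eq_or_lt_of_le hy0 with rfl | hy0'
  · -- y = 0 forces x = 0, τ₁ = 1
    have hx : x = 0 := le_antisymm (by nlinarith) hx0
    have hτ : τ₁ = 1 := le_antisymm ht1 (by linarith)
    rw [hx, hτ]
    simp
    linarith
  have hlogy0 : Real.logb 2 y ≤ 0 := Real.logb_nonpos hb hy0'.le hy1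
  have hlogyS : S₀ - τ₂ ≤ -Real.logb 2 y := by
    have : Real.logb 2 y ≤ Real.logb 2 ((2:ℝ) ^ (-(S₀ - τ₂))) :=
      Real.logb_le_logb_of_le hb hy0' h2
    rw [Real.logb_rpow (by norm_num) (by norm_num)] at this
    linarith
  rcases eq_or_lt_of_le hy1 with rfl | hy1'
  · -- y = 1
    have hst : S₀ - τ₂ ≤ 0 := by
      have := hlogyS; simp [Real.logb_self_eq_one] at this ⊢; linarith [this]
    have ent := ent_ge x hx0 hx1
    have h1x : (1-x) * Real.logb 2 (1-x) ≤ 0 :=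
      mul_nonpos_of_nonneg_of_nonpos (by linarith) (Real.logb_nonpos hb (by linarith) (by linarith))
    have : x * Real.logb 2 x ≥ -1 := by linarith
    simp only [sub_self, div_zero, Real.logb_zero, mul_zero, add_zero, div_one]
    nlinarith
  -- 0 < y < 1
  have hlog1y : Real.logb 2 (1-y) ≤ 0 := Real.logb_nonpos hb (by linarith) (by linarith)
  rcases eq_or_lt_of_le hx0 with rfl | hx0'
  · -- x = 0, τ₁ = 1
    have hτ : τ₁ = 1 := le_antisymm ht1 (by linarith)
    rw [hτ]
    have : (1:ℝ) / (1-y) = (1-y)⁻¹ := one_div _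
    simp [Real.logb_div (by norm_num : (1:ℝ) ≠ 0) (by linarith : (1:ℝ)-y ≠ 0)]
    linarith
  -- 0 < x
  have e1 : x * Real.logb 2 (x / y) = x * Real.logb 2 x - x * Real.logb 2 y := by
    rw [Real.logb_div hx0'.ne' hy0'.ne']; ring
  have e2 : (1-x) * Real.logb 2 ((1-x) / (1-y))
      = (1-x) * Real.logb 2 (1-x) - (1-x) * Real.logb 2 (1-y) := by
    rcases eq_or_lt_of_le hx1 with rfl | hx1'
    · simp
    · rw [Real.logb_div (by linarith : (1:ℝ)-x ≠ 0) (by linarith : (1:ℝ)-y ≠ 0)]; ring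
  rw [e1, e2]
  have ent := ent_ge x hx0 hx1
  have A : (1 - τ₁) * (S₀ - τ₂) ≤ x * (-Real.logb 2 y) := by nlinarith
  have B : τ₁ * Real.logb 2 lam ≤ (1-x) * (-Real.logb 2 (1-y)) := by nlinarith
  nlinarith

/-- lower bound on the measured relative entropy of a two-outcome PVM. -/
theorem stmt3 {K : Type*} [Fintype K] [DecidableEq K] [Nonempty K]
    (ρ σ P : Matrix K K ℂ) (hρ : IsDensity ρ) (hσ : IsDensity σ)
    (hσpd : σ.PosDef)
    (hP1 : P.IsHermitian) (hP2 : P * P = P)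
    (S₀ τ₁ τ₂ : ℝ) (hS₀ : 0 ≤ S₀) (hτ₁ : τ₁ ∈ Set.Icc (0:ℝ) 1) (hτ₂ : 0 ≤ τ₂)
    (h1 : 1 - τ₁ ≤ (ρ * P).trace.re)
    (h2 : (σ * P).trace.re ≤ (2:ℝ) ^ (-(S₀ - τ₂))) :
    -1 + (1 - τ₁) * (S₀ - τ₂) - τ₁ * (-(Real.logb 2 (⨅ i, hσpd.1.eigenvalues i)))
      ≤ klBin (ρ * P).trace.re (σ * P).trace.re := by
  set lam : ℝ := ⨅ i, hσpd.1.eigenvalues i with hlamdef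
  set x : ℝ := (ρ * P).trace.re
  set y : ℝ := (σ * P).trace.re
  -- P and 1 - P are PSD
  have hPpsd : P.PosSemidef := herm_proj_psd hP1 hP2
  have hQherm : (1 - P).IsHermitian := by
    unfold Matrix.IsHermitian
    rw [Matrix.conjTranspose_sub, Matrix.conjTranspose_one, hP1.eq]
  have hQmul : (1 - P) * (1 - P) = 1 - P := by
    have e : (1 - P) * (1 - P) = 1 - P - P + P * P := by noncomm_ring
    rw [e, hP2]
    abel
  have hQpsd : (1 - P).PosSemidef := herm_proj_psd hQherm hQmul
  -- eigenvalue facts for ρ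
  have hρH : ρ.IsHermitian := hρ.1.1
  have hρev : ∑ i, hρH.eigenvalues i = 1 := by
    have := trace_eq_sum_ev hρH
    rw [hρ.2] at this
    have h' := congrArg Complex.re this.symm
    simpa [Complex.re_sum] using h'
  have hρev1 : ∀ i, hρH.eigenvalues i ≤ 1 := by
    intro i
    calc hρH.eigenvalues i ≤ ∑ j, hρH.eigenvalues j :=
      Finset.single_le_sum (fun j _ => hρ.1.eigenvalues_nonneg j) (Finset.mem_univ i)
    _ = 1 := hρev
  have h1ρpsd : ((1 : Matrix K K ℂ) - ρ).PosSemidef := by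
    have := psd_smul_sub hρH 1 hρev1
    simpa using this
  -- eigenvalue facts for σ
  have hσH : σ.IsHermitian := hσpd.1
  have hσev : ∑ i, hσH.eigenvalues i = 1 := by
    have := trace_eq_sum_ev hσH
    rw [hσ.2] at this
    have h' := congrArg Complex.re this.symm
    simpa [Complex.re_sum] using h'
  have hlam_le : ∀ i, lam ≤ hσH.eigenvalues i := fun i =>
    ciInf_le (Set.Finite.bddBelow (Set.finite_range _)) i
  obtain ⟨i₀, hi₀⟩ := Finite.exists_min hσH.eigenvalues
  have hlampos : 0 < lam :=
    lt_of_lt_of_le (hσpd.eigenvalues_pos i₀) (le_ciInf hi₀)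
  have hlam1 : lam ≤ 1 := by
    by_contra hc
    push_neg at hc
    have hall : ∀ i ∈ Finset.univ, (1:ℝ) < hσH.eigenvalues i := fun i _ =>
      lt_of_lt_of_le hc (hlam_le i)
    have hlt : ∑ _i : K, (1:ℝ) < ∑ i, hσH.eigenvalues i :=
      Finset.sum_lt_sum_of_nonempty Finset.univ_nonempty hall
    rw [hσev, Finset.sum_const, Finset.card_univ, nsmul_eq_mul, mul_one] at hlt
    have : (1:ℝ) ≤ (Fintype.card K : ℝ) := by
      exact_mod_cast Nat.one_le_iff_ne_zero.mpr Fintype.card_ne_zero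
    linarith
  have hσlam : (σ - (lam : ℂ) • 1).PosSemidef := psd_sub_smul hσH lam hlam_le
  -- trace bounds
  have hx0 : 0 ≤ x := trace_mul_psd_nonneg hρ.1 hPpsd
  have hy0 : 0 ≤ y := trace_mul_psd_nonneg hσpd.posSemidef hPpsd
  have hsplitρ : (ρ * (1 - P)).trace = 1 - (ρ * P).trace := by
    rw [Matrix.mul_sub, Matrix.mul_one, Matrix.trace_sub, hρ.2]
  have hx1 : x ≤ 1 := by
    have h0 := trace_mul_psd_nonneg hρ.1 hQpsd
    rw [hsplitρ] at h0
    simp only [Complex.sub_re, Complex.one_re] at h0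
    linarith
  have hsplitσ : (σ * (1 - P)).trace = 1 - (σ * P).trace := by
    rw [Matrix.mul_sub, Matrix.mul_one, Matrix.trace_sub, hσ.2]
  have hy1 : y ≤ 1 := by
    have h0 := trace_mul_psd_nonneg hσpd.posSemidef hQpsd
    rw [hsplitσ] at h0
    simp only [Complex.sub_re, Complex.one_re] at h0
    linarith
  have htrP : x ≤ P.trace.re := by
    have h0 := trace_mul_psd_nonneg h1ρpsd hPpsd
    rw [Matrix.sub_mul, Matrix.one_mul, Matrix.trace_sub] at h0
    simp only [Complex.sub_re] at h0
    linarith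
  have hyx : lam * x ≤ y := by
    have h0 := trace_mul_psd_nonneg hσlam hPpsd
    rw [Matrix.sub_mul, Matrix.smul_mul, Matrix.one_mul, Matrix.trace_sub,
      Matrix.trace_smul] at h0
    have hre : ((lam : ℂ) • P.trace).re = lam * P.trace.re := by
      rw [smul_eq_mul, Complex.re_ofReal_mul]
    rw [Complex.sub_re, hre] at h0
    have : lam * x ≤ lam * P.trace.re := mul_le_mul_of_nonneg_left htrP hlampos.le
    linarith
  exact klBin_lower x y lam S₀ τ₁ τ₂ hx0 hx1 hy0 hy1 hlampos hlam1 hyx hτ₁.1 hτ₁.2 h1 h2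
end

section
/- Let K be a finite-dimensional Hilbert space and a, b ∈ B(K) operators with 0 ≤ a ≤ 1 and b ≥ 0. Then 1 − (a+b)^{−1/2} a (a+b)^{−1/2} ≤ 2(1 − a) + 4b, where (a+b)^{−1/2} denotes the square root of the generalized (Moore–Penrose) inverse of a+b. -/
open Matrix Kronecker BigOperators
open scoped ComplexOrder
open Classical

/-- square root of the generalized (Moore–Penrose) inverse of a Hermitian matrix. -/
noncomputable def ginvSqrt {n : Type*} [Fintype n] [DecidableEq n] (m : Matrix n n ℂ) :
    Matrix n n ℂ :=
  matFun (fun x => if x = 0 then 0 else (Real.sqrt x)⁻¹) m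

section HNaux
variable {n : Type*} [Fintype n] [DecidableEq n]


noncomputable def specF {m : Matrix n n ℂ} (h : m.IsHermitian) (f : ℝ → ℝ) : Matrix n n ℂ :=
  (h.eigenvectorUnitary : Matrix n n ℂ) *
    Matrix.diagonal (fun i => (f (h.eigenvalues i) : ℂ)) *
    star (h.eigenvectorUnitary : Matrix n n ℂ)

lemma specF_mul {m : Matrix n n ℂ} (h : m.IsHermitian) (f g : ℝ → ℝ) :
    specF h f * specF h g = specF h (fun x => f x * g x) := by
  have hU : star (h.eigenvectorUnitary : Matrix n n ℂ) * (h.eigenvectorUnitary : Matrix n n ℂ) = 1 :=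
    Matrix.mem_unitaryGroup_iff'.mp h.eigenvectorUnitary.2
  have key : specF h f * specF h g =
      (h.eigenvectorUnitary : Matrix n n ℂ) *
        ((Matrix.diagonal (fun i => (f (h.eigenvalues i) : ℂ))) *
          (star (h.eigenvectorUnitary : Matrix n n ℂ) * (h.eigenvectorUnitary : Matrix n n ℂ)) *
          (Matrix.diagonal (fun i => (g (h.eigenvalues i) : ℂ)))) *
        star (h.eigenvectorUnitary : Matrix n n ℂ) := by
    unfold specF; noncomm_ring
  rw [key, hU, mul_one, diagonal_mul_diagonal]
  unfold specF
  norm_cast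

lemma specF_herm {m : Matrix n n ℂ} (h : m.IsHermitian) (f : ℝ → ℝ) :
    (specF h f).IsHermitian := by
  unfold specF Matrix.IsHermitian
  rw [conjTranspose_mul, conjTranspose_mul, diagonal_conjTranspose]
  simp [Matrix.star_eq_conjTranspose, mul_assoc, Pi.star_def, Complex.conj_ofReal]

lemma specF_psd {m : Matrix n n ℂ} (h : m.IsHermitian) (f : ℝ → ℝ)
    (hf : ∀ i, 0 ≤ f (h.eigenvalues i)) : (specF h f).PosSemidef := by
  have hd : (Matrix.diagonal (fun i => (f (h.eigenvalues i) : ℂ))).PosSemidef :=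
    Matrix.posSemidef_diagonal_iff.mpr fun i => by
      simpa using Complex.zero_le_real.mpr (hf i)
  simpa [specF, Matrix.star_eq_conjTranspose] using
    hd.mul_mul_conjTranspose_same (h.eigenvectorUnitary : Matrix n n ℂ)

lemma specF_congr {m : Matrix n n ℂ} (h : m.IsHermitian) {f g : ℝ → ℝ}
    (hfg : ∀ i, f (h.eigenvalues i) = g (h.eigenvalues i)) : specF h f = specF h g := by
  have : (fun i => (f (h.eigenvalues i) : ℂ)) = (fun i => (g (h.eigenvalues i) : ℂ)) :=
    funext fun i => by rw [hfg i]
  unfold specF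
  rw [this]

lemma specF_id {m : Matrix n n ℂ} (h : m.IsHermitian) : specF h (fun x => x) = m := by
  conv_rhs => rw [h.spectral_theorem]
  rfl

lemma specF_one {m : Matrix n n ℂ} (h : m.IsHermitian) : specF h (fun _ => 1) = 1 := by
  have hU : (h.eigenvectorUnitary : Matrix n n ℂ) * star (h.eigenvectorUnitary : Matrix n n ℂ) = 1 :=
    Matrix.mem_unitaryGroup_iff.mp h.eigenvectorUnitary.2
  unfold specF
  simp [hU]

lemma specF_sub {m : Matrix n n ℂ} (h : m.IsHermitian) (f g : ℝ → ℝ) :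
    specF h f - specF h g = specF h (fun x => f x - g x) := by
  unfold specF
  rw [← sub_mul, ← mul_sub, diagonal_sub]
  push_cast
  rfl



/-- Loewner–Heinz for square roots (difference form). -/
lemma sub_psd_of_sq_sub_sq {A B : Matrix n n ℂ} (hA : A.PosSemidef) (hB : B.PosSemidef)
    (h : (B * B - A * A).PosSemidef) : (B - A).PosSemidef := by
  have hM : (B - A).IsHermitian := hB.1.sub hA.1
  refine hM.posSemidef_iff_eigenvalues_nonneg.mpr fun i => (?_ : 0 ≤ hM.eigenvalues i)
  by_contra hneg
  push_neg at hneg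
  set t : ℝ := hM.eigenvalues i with ht
  set v : n → ℂ := ⇑(hM.eigenvectorBasis i) with hv
  have hvne : v ≠ 0 := fun h0 => hM.eigenvectorBasis.orthonormal.ne_zero i (by
    ext j; have := congrFun h0 j; rw [hv] at this; simpa using this)
  have hv' : (B - A) *ᵥ v = (t : ℂ) • v := by
    have := hM.mulVec_eigenvectorBasis i
    rw [← hv] at this
    rw [this]
    ext j
    simp [RCLike.real_smul_eq_coe_mul, ht]
  have h_sum : star v ⬝ᵥ (B * B - A * A) *ᵥ v
      = t * (star v ⬝ᵥ B *ᵥ v + star v ⬝ᵥ A *ᵥ v) := by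
    calc star v ⬝ᵥ (B * B - A * A) *ᵥ v
        = star v ⬝ᵥ B *ᵥ (B - A) *ᵥ v + star v ⬝ᵥ (B - A) *ᵥ A *ᵥ v := by
          rw [mulVec_mulVec, mulVec_mulVec, ← dotProduct_add, ← add_mulVec, mul_sub, sub_mul,
            add_sub, sub_add_cancel]
      _ = t * (star v ⬝ᵥ B *ᵥ v) + (star v) ᵥ* (B - A)ᴴ ⬝ᵥ A *ᵥ v := by
          rw [hv', mulVec_smul, dotProduct_smul, dotProduct_mulVec _ (B - A), hM]
          simp [smul_eq_mul]
      _ = t * (star v ⬝ᵥ B *ᵥ v + star v ⬝ᵥ A *ᵥ v) := by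
          rw [← star_mulVec, hv', mul_add]
          congr 1
          simp [star_smul, smul_dotProduct, Complex.conj_ofReal, smul_eq_mul]
  have hge : (0:ℂ) ≤ star v ⬝ᵥ (B * B - A * A) *ᵥ v := h.dotProduct_mulVec_nonneg v
  have hBn : (0:ℂ) ≤ star v ⬝ᵥ B *ᵥ v := hB.dotProduct_mulVec_nonneg v
  have hAn : (0:ℂ) ≤ star v ⬝ᵥ A *ᵥ v := hA.dotProduct_mulVec_nonneg v
  set s : ℂ := star v ⬝ᵥ B *ᵥ v + star v ⬝ᵥ A *ᵥ v with hs
  have hsn : 0 ≤ s := add_nonneg hBn hAn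
  have hts : (0:ℂ) ≤ (t:ℂ) * s := by rw [← h_sum]; exact hge
  have htle : (t:ℂ) * s ≤ 0 := mul_nonpos_of_nonpos_of_nonneg (by
    simpa using Complex.real_le_real.mpr hneg.le) hsn
  have hs0 : s = 0 := by
    have : (t:ℂ) * s = 0 := le_antisymm htle hts
    rcases mul_eq_zero.mp this with h'|h'
    · exact absurd (by exact_mod_cast h') hneg.ne
    · exact h'
  have hB0 : star v ⬝ᵥ B *ᵥ v = 0 := by
    have := add_eq_zero_iff_of_nonneg hBn hAn |>.mp hs0
    exact this.1
  have hA0 : star v ⬝ᵥ A *ᵥ v = 0 := (add_eq_zero_iff_of_nonneg hBn hAn |>.mp hs0).2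
  have hBv : B *ᵥ v = 0 := (hB.dotProduct_mulVec_zero_iff v).mp hB0
  have hAv : A *ᵥ v = 0 := (hA.dotProduct_mulVec_zero_iff v).mp hA0
  have : (t:ℂ) • v = 0 := by rw [← hv', sub_mulVec, hBv, hAv, sub_zero]
  rcases smul_eq_zero.mp this with h'|h'
  · exact hneg.ne (by exact_mod_cast h')
  · exact hvne h'

/-- eigenvalues of `a` are at most 1 when `1 - a` is PSD. -/
lemma eig_le_one {a : Matrix n n ℂ} (ha : a.IsHermitian)
    (ha1 : ((1 : Matrix n n ℂ) - a).PosSemidef) (i : n) : ha.eigenvalues i ≤ 1 := by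
  have h2 := ha1.re_dotProduct_nonneg ⇑(ha.eigenvectorBasis i)
  have hnorm : star ⇑(ha.eigenvectorBasis i) ⬝ᵥ ⇑(ha.eigenvectorBasis i) = 1 := by
    have := ha.eigenvectorBasis.orthonormal.1 i
    have h' := EuclideanSpace.inner_eq_star_dotProduct (𝕜 := ℂ)
      (ha.eigenvectorBasis i) (ha.eigenvectorBasis i)
    rw [@inner_self_eq_norm_sq_to_K ℂ] at h'
    rw [this] at h'
    rw [dotProduct_comm]
    simpa using h'.symm
  have heig := ha.eigenvalues_eq i
  rw [sub_mulVec, dotProduct_sub, one_mulVec, hnorm] at h2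
  rw [map_sub] at h2
  simp only [RCLike.one_re] at h2
  rw [← heig] at h2
  linarith

end HNaux

/-- Hayashi–Nagaoka operator inequality. -/
theorem stmt4 {n : Type*} [Fintype n] [DecidableEq n] (a b : Matrix n n ℂ)
    (ha : a.PosSemidef) (ha1 : ((1 : Matrix n n ℂ) - a).PosSemidef) (hb : b.PosSemidef) :
    ((2:ℂ) • ((1 : Matrix n n ℂ) - a) + (4:ℂ) • b
      - ((1 : Matrix n n ℂ) - ginvSqrt (a + b) * a * ginvSqrt (a + b))).PosSemidef := by
  have hm : (a + b).PosSemidef := ha.add hb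
  have h : (a + b).IsHermitian := hm.1
  have heignn : ∀ i, 0 ≤ h.eigenvalues i := hm.eigenvalues_nonneg
  set gf : ℝ → ℝ := fun x => if x = 0 then 0 else (Real.sqrt x)⁻¹ with hgf
  have hP : ginvSqrt (a + b) = specF h gf := by
    unfold ginvSqrt matFun specF
    rw [dif_pos h]
  set P := specF h gf with hPdef
  set N := specF h Real.sqrt with hNdef
  set Pi := specF h (fun x => if x = 0 then 0 else 1) with hPidef
  have e2 : P * (a + b) = N := by
    have key := specF_mul h gf (fun x => x)
    rw [specF_id] at key
    rw [hPdef, key, hNdef]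
    refine specF_congr h fun i => ?_
    by_cases h0 : h.eigenvalues i = 0
    · simp [hgf, h0]
    · have hpos : 0 < h.eigenvalues i := lt_of_le_of_ne (heignn i) (Ne.symm h0)
      have hs : Real.sqrt (h.eigenvalues i) ≠ 0 := ne_of_gt (Real.sqrt_pos.mpr hpos)
      simp only [hgf, if_neg h0]
      field_simp
      exact (Real.sq_sqrt hpos.le).symm
  have e3 : (a + b) * P = N := by
    have key := specF_mul h (fun x => x) gf
    rw [specF_id] at key
    rw [hPdef, key, hNdef]
    refine specF_congr h fun i => ?_
    by_cases h0 : h.eigenvalues i = 0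
    · simp [hgf, h0]
    · have hpos : 0 < h.eigenvalues i := lt_of_le_of_ne (heignn i) (Ne.symm h0)
      have hs : Real.sqrt (h.eigenvalues i) ≠ 0 := ne_of_gt (Real.sqrt_pos.mpr hpos)
      simp only [hgf, if_neg h0]
      rw [mul_comm]
      field_simp
      exact (Real.sq_sqrt hpos.le).symm
  have e1 : P * (a + b) * P = Pi := by
    rw [e2, hNdef, hPdef, specF_mul, hPidef]
    refine specF_congr h fun i => ?_
    by_cases h0 : h.eigenvalues i = 0
    · simp [hgf, h0]
    · have hpos : 0 < h.eigenvalues i := lt_of_le_of_ne (heignn i) (Ne.symm h0)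
      have hs : Real.sqrt (h.eigenvalues i) ≠ 0 := ne_of_gt (Real.sqrt_pos.mpr hpos)
      simp [hgf, if_neg h0, mul_inv_cancel₀ hs]
  have hPherm : P.IsHermitian := specF_herm h gf
  have hNpsd : N.PosSemidef := specF_psd h _ (fun i => Real.sqrt_nonneg _)
  have hNN : N * N = a + b := by
    rw [hNdef, specF_mul]
    have : specF h (fun x => Real.sqrt x * Real.sqrt x) = specF h (fun x => x) :=
      specF_congr h fun i => Real.mul_self_sqrt (heignn i)
    rw [this, specF_id]
  have hPi1 : ((1 : Matrix n n ℂ) - Pi).PosSemidef := by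
    have key := specF_sub h (fun _ => 1) (fun x => if x = 0 then 0 else 1)
    rw [specF_one] at key
    rw [hPidef, key]
    refine specF_psd h _ fun i => ?_
    by_cases h0 : h.eigenvalues i = 0 <;> simp [h0]
  have hNA : (N - specF ha.1 Real.sqrt).PosSemidef := by
    refine sub_psd_of_sq_sub_sq (specF_psd ha.1 _ fun i => Real.sqrt_nonneg _) hNpsd ?_
    rw [hNN, specF_mul, specF_congr ha.1 (g := fun x => x)
      fun i => Real.mul_self_sqrt (ha.eigenvalues_nonneg i), specF_id]
    simpa using hb
  have hsqa : specF ha.1 Real.sqrt = specF ha.1 Real.sqrt := rfl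
  have hAa : (specF ha.1 Real.sqrt - a).PosSemidef := by
    have key := specF_sub ha.1 Real.sqrt (fun x => x)
    rw [specF_id] at key
    rw [hsqa, key]
    refine specF_psd ha.1 _ fun i => ?_
    have h0 := ha.eigenvalues_nonneg i
    have h1 := eig_le_one ha.1 ha1 i
    have hle : ha.1.eigenvalues i ≤ Real.sqrt (ha.1.eigenvalues i) := by
      nth_rewrite 1 [show ha.1.eigenvalues i = Real.sqrt ((ha.1.eigenvalues i)^2) from
        (Real.sqrt_sq h0).symm]
      exact Real.sqrt_le_sqrt (by nlinarith)
    linarith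
  have hNa : (N - a).PosSemidef := by
    have key := hNA.add hAa
    rw [sub_add_sub_cancel] at key
    exact key
  have hherm1 : ((P - 1) : Matrix n n ℂ).IsHermitian := hPherm.sub Matrix.isHermitian_one
  have hherm2 : ((P - 2) : Matrix n n ℂ).IsHermitian := by
    refine hPherm.sub ?_
    rw [show (2 : Matrix n n ℂ) = 1 + 1 from by norm_num]
    exact Matrix.isHermitian_one.add Matrix.isHermitian_one
  have hc1 : ((P - 1) * a * (P - 1)).PosSemidef := by
    have key := ha.mul_mul_conjTranspose_same (P - 1)
    rwa [hherm1.eq] at key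
  have hc2 : ((P - 2) * b * (P - 2)).PosSemidef := by
    have key := hb.mul_mul_conjTranspose_same (P - 2)
    rwa [hherm2.eq] at key
  rw [hP]
  have key : (2:ℂ) • ((1 : Matrix n n ℂ) - a) + (4:ℂ) • b
      - ((1 : Matrix n n ℂ) - P * a * P)
      = (((1 : Matrix n n ℂ) - P * (a + b) * P)
          + ((P * (a + b) - a) + ((a + b) * P - a) + ((P * (a + b) - a) + ((a + b) * P - a)))
          + ((P - 1) * a * (P - 1) + (P - 1) * a * (P - 1))
          + (P - 2) * b * (P - 2)) := by
    rw [two_smul, show (4:ℂ) • b = b + b + (b + b) from by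
      rw [show (4:ℂ) = 2 + 2 from by norm_num, add_smul, two_smul]]
    noncomm_ring
  rw [key, e1, e2, e3]
  exact (((hPi1.add (((hNa.add hNa).add (hNa.add hNa)))).add (hc1.add hc1)).add hc2)
end

section
/- Let (T, Σ, μ) be a probability space, f, f_n : T → R measurable bounded functions with f_n(t) → f(t) pointwise for all t ∈ T, and (G_n) a sequence of measurable subsets of T with μ(G_n) → 1. Then limsup_{n→∞} inf_{t∈G_n} f_n(t) ≤ ess-inf_{t∈T} f, where ess-inf f := sup{c ∈ R : μ({t : f(t) < c}) = 0}. -/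
open Matrix Kronecker BigOperators
open scoped ComplexOrder
open Classical

open MeasureTheory

/-- the essential infimum as defined in the paper. -/
noncomputable def essInfVal {T : Type*} [MeasurableSpace T] (μ : Measure T) (f : T → ℝ) : ℝ :=
  sSup {c : ℝ | μ {t | f t < c} = 0}

/-- limsup of infima over sets of measure tending to one is bounded by
the essential infimum of the limit function. -/
theorem stmt7 {T : Type*} [MeasurableSpace T] (μ : Measure T) [IsProbabilityMeasure μ]
    (f : T → ℝ) (fn : ℕ → T → ℝ) (hf : Measurable f) (hfn : ∀ n, Measurable (fn n))
    (M : ℝ) (hbf : ∀ t, |f t| ≤ M) (hbfn : ∀ n t, |fn n t| ≤ M)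
    (hconv : ∀ t, Filter.Tendsto (fun n => fn n t) Filter.atTop (nhds (f t)))
    (G : ℕ → Set T) (hG : ∀ n, MeasurableSet (G n))
    (hGm : Filter.Tendsto (fun n => μ (G n)) Filter.atTop (nhds 1)) :
    Filter.limsup (fun n => sInf (fn n '' G n)) Filter.atTop ≤ essInfVal μ f := by
  classical
  -- T is nonempty
  have hTne : Nonempty T := by
    by_contra h
    have : μ Set.univ = 0 := by
      simp [Set.univ_eq_empty_iff.2 (not_nonempty_iff.mp h)]
    simp [measure_univ] at this
  obtain ⟨t0⟩ := hTne
  have hM0 : 0 ≤ M := le_trans (abs_nonneg _) (hbf t0)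
  set L : ℝ := essInfVal μ f with hL
  -- key: for ε > 0, μ {f < L + ε} ≠ 0
  have hbdd : BddAbove {c : ℝ | μ {t | f t < c} = 0} := by
    refine ⟨M, fun c hc => ?_⟩
    by_contra hcM
    push_neg at hcM
    have : {t | f t < c} = Set.univ := by
      ext t
      simp only [Set.mem_setOf_eq, Set.mem_univ, iff_true]
      exact lt_of_le_of_lt (le_trans (le_abs_self _) (hbf t)) hcM
    simp only [Set.mem_setOf_eq, this, measure_univ] at hc
    exact one_ne_zero hc
  have hkey : ∀ ε : ℝ, 0 < ε → μ {t | f t < L + ε} ≠ 0 := by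
    intro ε hε h0
    have : L + ε ≤ L := le_csSup hbdd h0
    linarith
  -- lower bound for the sequence
  have hlb : ∀ n, min (-M) 0 ≤ sInf (fn n '' G n) := by
    intro n
    rcases Set.eq_empty_or_nonempty (G n) with h | h
    · simp [h, min_le_iff]
    · refine le_trans (min_le_left _ _) (le_csInf (h.image _) ?_)
      rintro x ⟨t, _, rfl⟩
      exact neg_le_of_abs_le (hbfn n t)
  have hcobdd : Filter.IsCoboundedUnder (· ≤ ·) Filter.atTop
      (fun n => sInf (fn n '' G n)) := by
    apply Filter.IsBoundedUnder.isCoboundedUnder_le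
    exact ⟨min (-M) 0, Filter.eventually_atTop.2 ⟨0, fun n _ => hlb n⟩⟩
  refine le_of_forall_pos_le_add ?_
  intro ε hε
  refine Filter.limsup_le_of_le hcobdd ?_
  set A : Set T := {t | f t < L + ε / 2} with hA
  have hAne : μ A ≠ 0 := hkey _ (by linarith)
  set C : ℕ → Set T := fun n => A ∩ {t | ∀ m, n ≤ m → fn m t ≤ L + ε} with hC
  have hCmeas : ∀ n, MeasurableSet (C n) := by
    intro n
    refine (measurableSet_lt hf measurable_const).inter ?_
    have : {t | ∀ m, n ≤ m → fn m t ≤ L + ε}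
        = ⋂ m, ⋂ (_ : n ≤ m), {t | fn m t ≤ L + ε} := by
      ext t; simp
    rw [this]
    exact MeasurableSet.iInter fun m => MeasurableSet.iInter fun _ =>
      measurableSet_le (hfn m) measurable_const
  have hCmono : Monotone C := by
    intro a b hab t ht
    exact ⟨ht.1, fun m hm => ht.2 m (le_trans hab hm)⟩
  have hCUnion : ⋃ n, C n = A := by
    apply Set.Subset.antisymm
    · exact Set.iUnion_subset fun n => Set.inter_subset_left
    · intro t ht
      have h1 : ∀ᶠ m in Filter.atTop, fn m t ≤ L + ε :=
        (hconv t).eventually_le_const (by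
          have : f t < L + ε / 2 := ht
          linarith)
      obtain ⟨N, hN⟩ := Filter.eventually_atTop.1 h1
      exact Set.mem_iUnion.2 ⟨N, ht, hN⟩
  have hCt : Filter.Tendsto (fun n => μ (C n)) Filter.atTop (nhds (μ A)) := by
    rw [← hCUnion]
    exact tendsto_measure_iUnion_atTop hCmono
  obtain ⟨N, hN⟩ := (hCt.eventually_const_lt (pos_iff_ne_zero.2 hAne)).exists
  -- complements of G n have small measure eventually
  have hGc : Filter.Tendsto (fun n => μ (G n)ᶜ) Filter.atTop (nhds 0) := by
    have h1 : Filter.Tendsto (fun n => (1 : ENNReal) - μ (G n)) Filter.atTop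
        (nhds (1 - 1)) :=
      ENNReal.Tendsto.sub tendsto_const_nhds hGm (Or.inl (by simp))
    simp only [tsub_self] at h1
    refine h1.congr fun n => ?_
    rw [prob_compl_eq_one_sub (hG n)]
  have hev : ∀ᶠ n in Filter.atTop, μ (G n)ᶜ < μ (C N) := hGc.eventually_lt_const hN
  filter_upwards [hev, Filter.eventually_ge_atTop N] with n hn hnN
  -- find a point in C N ∩ G n
  have hne : μ (C N ∩ G n) ≠ 0 := by
    intro h0
    have hsub : C N ⊆ (C N ∩ G n) ∪ (G n)ᶜ := by
      intro t ht
      by_cases htG : t ∈ G n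
      · exact Or.inl ⟨ht, htG⟩
      · exact Or.inr htG
    have h1 : μ (C N) ≤ μ ((C N ∩ G n) ∪ (G n)ᶜ) := measure_mono hsub
    have h2 : μ (C N) ≤ μ (C N ∩ G n) + μ (G n)ᶜ :=
      le_trans h1 (measure_union_le _ _)
    rw [h0, zero_add] at h2
    exact absurd h2 (not_le.2 hn)
  obtain ⟨t, ht⟩ := nonempty_of_measure_ne_zero hne
  have hle : fn n t ≤ L + ε := ht.1.2 n hnN
  have : sInf (fn n '' G n) ≤ fn n t := by
    refine csInf_le ⟨-M, ?_⟩ ⟨t, ht.2, rfl⟩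
    rintro x ⟨s, _, rfl⟩
    exact neg_le_of_abs_le (hbfn n s)
  linarith
end

section
/- Let T be a finite set, X and J finite sets, and for each t ∈ T let V_t : X → P(J) be a stochastic matrix. Fix r ∈ P(X), let q_t(j) := Σ_x r(x)V_t(j|x), and for a ∈ N define the averaged channel V^a(j^a|x^a) := (1/|T|) Σ_t V_t^a(j^a|x^a), q^a := (1/|T|) Σ_t q_t^{⊗a}, the joint distribution p'^a(x^a,j^a) := r^{⊗a}(x^a) V^a(j^a|x^a), and information densities i_t^a(x^a,j^a) := (1/a) log(V_t^a(j^a|x^a)/q_t^{⊗a}(j^a)) and i^a(x^a,j^a) := (1/a) log(V^a(j^a|x^a)/q^a(j^a)). Then for all α, β ∈ R: P(i^a ≤ α) ≤ (1/|T|) Σ_{t∈T} P_t(i_t^a ≤ α + β) + |T| · 2^{−aβ}, where P is taken with respect to p'^a and P_t with respect to r^{⊗a}(x^a)V_t^a(j^a|x^a). -/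
open Matrix Kronecker BigOperators
open scoped ComplexOrder
open Classical

/-- Blackwell–Breiman–Thomasian inequality for the averaged channel. -/
theorem stmt9 {T X J : Type*} [Fintype T] [Fintype X] [Fintype J] [Nonempty T]
    (V : T → X → J → ℝ) (hV : ∀ t x, IsProb (V t x))
    (r : X → ℝ) (hr : IsProb r) (a : ℕ) (α β : ℝ) :
    let q : T → J → ℝ := fun t j => ∑ x, r x * V t x j
    let Va : (Fin a → X) → (Fin a → J) → ℝ :=
      fun xs js => (1 / (Fintype.card T : ℝ)) * ∑ t, ∏ k, V t (xs k) (js k)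
    let qa : (Fin a → J) → ℝ :=
      fun js => (1 / (Fintype.card T : ℝ)) * ∑ t, ∏ k, q t (js k)
    let pa : (Fin a → X) → (Fin a → J) → ℝ :=
      fun xs js => (∏ k, r (xs k)) * Va xs js
    (∑ xs : Fin a → X, ∑ js : Fin a → J,
        if Va xs js ≤ (2:ℝ) ^ ((a : ℝ) * α) * qa js then pa xs js else 0)
      ≤ (1 / (Fintype.card T : ℝ)) * ∑ t, (∑ xs : Fin a → X, ∑ js : Fin a → J,
          if (∏ k, V t (xs k) (js k)) ≤ (2:ℝ) ^ ((a : ℝ) * (α + β)) * ∏ k, q t (js k)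
          then (∏ k, r (xs k)) * ∏ k, V t (xs k) (js k) else 0)
        + (Fintype.card T : ℝ) * (2:ℝ) ^ (-(a : ℝ) * β) := by
  intro q Va qa pa
  classical
  set c : ℝ := (Fintype.card T : ℝ) with hcdef
  have hc0 : (0:ℝ) < c := by
    rw [hcdef]
    exact_mod_cast Fintype.card_pos
  have hcne : ((Fintype.card T : ℝ)) ≠ 0 := by
    have : (0:ℝ) < (Fintype.card T : ℝ) := by exact_mod_cast Fintype.card_pos
    exact ne_of_gt this
  have hVnn : ∀ t x j, 0 ≤ V t x j := fun t x => (hV t x).1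
  have hVsum : ∀ t x, ∑ j, V t x j = 1 := fun t x => (hV t x).2
  have hrnn := hr.1
  have hrsum := hr.2
  have hqnn : ∀ t j, 0 ≤ q t j := fun t j =>
    Finset.sum_nonneg fun x _ => mul_nonneg (hrnn x) (hVnn t x j)
  have hqsum : ∀ t, ∑ j, q t j = 1 := by
    intro t
    simp only [q]
    rw [Finset.sum_comm]
    simp [← Finset.mul_sum, hVsum, hrsum]
  set K1 : ℝ := (2:ℝ) ^ ((a : ℝ) * α) with hK1
  set K2 : ℝ := (2:ℝ) ^ ((a : ℝ) * (α + β)) with hK2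
  set K3 : ℝ := c * (2:ℝ) ^ (-(a : ℝ) * β) with hK3
  have hK2pos : 0 < K2 := Real.rpow_pos_of_pos (by norm_num) _
  have hK3nn : 0 ≤ K3 := mul_nonneg hc0.le (Real.rpow_pos_of_pos (by norm_num) _).le
  have hkey : c * K1 = K3 * K2 := by
    rw [hK1, hK2, hK3, mul_assoc, ← Real.rpow_add (by norm_num : (0:ℝ) < 2)]
    ring_nf
  have hWnn : ∀ t (xs : Fin a → X) (js : Fin a → J), 0 ≤ ∏ k, V t (xs k) (js k) :=
    fun t xs js => Finset.prod_nonneg fun k _ => hVnn _ _ _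
  have hRnn : ∀ xs : Fin a → X, 0 ≤ ∏ k, r (xs k) :=
    fun xs => Finset.prod_nonneg fun k _ => hrnn _
  have hQtnn : ∀ t (js : Fin a → J), 0 ≤ ∏ k, q t (js k) :=
    fun t js => Finset.prod_nonneg fun k _ => hqnn _ _
  have hqann : ∀ js : Fin a → J, 0 ≤ qa js := by
    intro js
    have h1 : 0 ≤ ∑ t, ∏ k, q t (js k) := Finset.sum_nonneg fun t _ => hQtnn t js
    have h2 : 0 ≤ 1 / (Fintype.card T : ℝ) := by positivity
    exact mul_nonneg h2 h1
  -- marginal identity: ∑_xs r^a · V_t^a = q_t^a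
  have hQW : ∀ t (js : Fin a → J),
      (∑ xs : Fin a → X, (∏ k, r (xs k)) * ∏ k, V t (xs k) (js k)) = ∏ k, q t (js k) := by
    intro t js
    have h1 : ∀ xs : Fin a → X, (∏ k, r (xs k)) * ∏ k, V t (xs k) (js k)
        = ∏ k, (r (xs k) * V t (xs k) (js k)) := fun xs => (Finset.prod_mul_distrib).symm
    have e := Finset.prod_univ_sum (fun _ : Fin a => (Finset.univ : Finset X))
      (fun k x => r x * V t x (js k))
    rw [Fintype.piFinset_univ] at e
    simp_rw [h1]
    rw [← e]
  -- total mass of qa is 1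
  have hqasum : ∑ js : Fin a → J, qa js = 1 := by
    have h1 : ∀ t : T, (∑ js : Fin a → J, ∏ k, q t (js k)) = 1 := by
      intro t
      have e := Finset.prod_univ_sum (fun _ : Fin a => (Finset.univ : Finset J))
        (fun _ j => q t j)
      rw [Fintype.piFinset_univ] at e
      rw [← e]
      simp [hqsum t]
    simp only [qa]
    rw [← Finset.mul_sum, Finset.sum_comm]
    simp only [h1]
    rw [Finset.sum_const, Finset.card_univ, nsmul_eq_mul, mul_one, one_div,
      inv_mul_cancel₀ hcne]
  -- Step 1: rewrite LHS as average over t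
  have hpt : ∀ (xs : Fin a → X) (js : Fin a → J),
      (if Va xs js ≤ K1 * qa js then pa xs js else 0)
      = ∑ t, (1 / c) *
          (if Va xs js ≤ K1 * qa js then (∏ k, r (xs k)) * ∏ k, V t (xs k) (js k) else 0) := by
    intro xs js
    by_cases h : Va xs js ≤ K1 * qa js
    · simp only [h, if_true]
      simp only [pa, Va]
      rw [hcdef]
      simp only [Finset.mul_sum]
      exact Finset.sum_congr rfl fun t _ => by ring
    · simp [h]
  have hstep1 : (∑ xs : Fin a → X, ∑ js : Fin a → J,
        if Va xs js ≤ K1 * qa js then pa xs js else 0)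
      = ∑ t, ∑ xs : Fin a → X, ∑ js : Fin a → J, (1 / c) *
          (if Va xs js ≤ K1 * qa js then (∏ k, r (xs k)) * ∏ k, V t (xs k) (js k) else 0) := by
    simp_rw [hpt]
    calc (∑ xs : Fin a → X, ∑ js : Fin a → J, ∑ t, (1 / c) *
          (if Va xs js ≤ K1 * qa js then (∏ k, r (xs k)) * ∏ k, V t (xs k) (js k) else 0))
        = ∑ xs : Fin a → X, ∑ t, ∑ js : Fin a → J, (1 / c) *
          (if Va xs js ≤ K1 * qa js then (∏ k, r (xs k)) * ∏ k, V t (xs k) (js k) else 0) :=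
          Finset.sum_congr rfl fun xs _ => Finset.sum_comm
      _ = _ := Finset.sum_comm
  rw [hstep1]
  -- Step 2: per-t bound
  have hper : ∀ t, (∑ xs : Fin a → X, ∑ js : Fin a → J,
        if Va xs js ≤ K1 * qa js then (∏ k, r (xs k)) * ∏ k, V t (xs k) (js k) else 0)
      ≤ (∑ xs : Fin a → X, ∑ js : Fin a → J,
          if (∏ k, V t (xs k) (js k)) ≤ K2 * ∏ k, q t (js k)
          then (∏ k, r (xs k)) * ∏ k, V t (xs k) (js k) else 0) + K3 := by
    intro t
    have hpoint : ∀ (xs : Fin a → X) (js : Fin a → J),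
        (if Va xs js ≤ K1 * qa js then (∏ k, r (xs k)) * ∏ k, V t (xs k) (js k) else 0)
        ≤ (if (∏ k, V t (xs k) (js k)) ≤ K2 * ∏ k, q t (js k)
            then (∏ k, r (xs k)) * ∏ k, V t (xs k) (js k) else 0)
          + (if (∏ k, q t (js k)) ≤ K3 * qa js
            then (∏ k, r (xs k)) * ∏ k, V t (xs k) (js k) else 0) := by
      intro xs js
      have hfnn : 0 ≤ (∏ k, r (xs k)) * ∏ k, V t (xs k) (js k) :=
        mul_nonneg (hRnn xs) (hWnn t xs js)
      have hnn1 : (0:ℝ) ≤ (if (∏ k, V t (xs k) (js k)) ≤ K2 * ∏ k, q t (js k)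
          then (∏ k, r (xs k)) * ∏ k, V t (xs k) (js k) else 0) := by
        split
        · exact hfnn
        · exact le_rfl
      have hnn2 : (0:ℝ) ≤ (if (∏ k, q t (js k)) ≤ K3 * qa js
          then (∏ k, r (xs k)) * ∏ k, V t (xs k) (js k) else 0) := by
        split
        · exact hfnn
        · exact le_rfl
      by_cases hA : Va xs js ≤ K1 * qa js
      · by_cases hB : (∏ k, V t (xs k) (js k)) ≤ K2 * ∏ k, q t (js k)
        · rw [if_pos hA, if_pos hB]
          linarith
        · have hWle : (∏ k, V t (xs k) (js k)) ≤ c * Va xs js := by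
            have hsingle : (∏ k, V t (xs k) (js k)) ≤ ∑ s, ∏ k, V s (xs k) (js k) :=
              Finset.single_le_sum (fun s _ => hWnn s xs js) (Finset.mem_univ t)
            have hcv : c * Va xs js = ∑ s, ∏ k, V s (xs k) (js k) := by
              simp only [Va]
              rw [hcdef, ← mul_assoc, mul_one_div, div_self hcne, one_mul]
            rw [hcv]
            exact hsingle
          have hlt : K2 * ∏ k, q t (js k) < (∏ k, V t (xs k) (js k)) := lt_of_not_ge hB
          have hchain : K2 * ∏ k, q t (js k) < K2 * (K3 * qa js) := by
            calc K2 * ∏ k, q t (js k) < (∏ k, V t (xs k) (js k)) := hlt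
              _ ≤ c * Va xs js := hWle
              _ ≤ c * (K1 * qa js) := mul_le_mul_of_nonneg_left hA hc0.le
              _ = K2 * (K3 * qa js) := by rw [← mul_assoc, hkey]; ring
          have hD : (∏ k, q t (js k)) ≤ K3 * qa js :=
            ((mul_lt_mul_iff_right₀ hK2pos).mp hchain).le
          rw [if_pos hA, if_pos hD]
          linarith
      · rw [if_neg hA]
        linarith
    have hsum1 : (∑ xs : Fin a → X, ∑ js : Fin a → J,
        if Va xs js ≤ K1 * qa js then (∏ k, r (xs k)) * ∏ k, V t (xs k) (js k) else 0)
      ≤ (∑ xs : Fin a → X, ∑ js : Fin a → J,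
          if (∏ k, V t (xs k) (js k)) ≤ K2 * ∏ k, q t (js k)
          then (∏ k, r (xs k)) * ∏ k, V t (xs k) (js k) else 0)
        + (∑ xs : Fin a → X, ∑ js : Fin a → J,
          if (∏ k, q t (js k)) ≤ K3 * qa js
          then (∏ k, r (xs k)) * ∏ k, V t (xs k) (js k) else 0) := by
      rw [← Finset.sum_add_distrib]
      refine Finset.sum_le_sum fun xs _ => ?_
      rw [← Finset.sum_add_distrib]
      exact Finset.sum_le_sum fun js _ => hpoint xs js
    have hsum2 : (∑ xs : Fin a → X, ∑ js : Fin a → J,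
          if (∏ k, q t (js k)) ≤ K3 * qa js
          then (∏ k, r (xs k)) * ∏ k, V t (xs k) (js k) else 0) ≤ K3 := by
      rw [Finset.sum_comm]
      have h1 : ∀ js : Fin a → J, (∑ xs : Fin a → X,
          if (∏ k, q t (js k)) ≤ K3 * qa js
          then (∏ k, r (xs k)) * ∏ k, V t (xs k) (js k) else 0)
          = (if (∏ k, q t (js k)) ≤ K3 * qa js then ∏ k, q t (js k) else 0) := by
        intro js
        by_cases h : (∏ k, q t (js k)) ≤ K3 * qa js
        · simp only [h, if_true]
          exact hQW t js
        · simp [h]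
      simp_rw [h1]
      have h2 : ∀ js : Fin a → J,
          (if (∏ k, q t (js k)) ≤ K3 * qa js then ∏ k, q t (js k) else 0) ≤ K3 * qa js := by
        intro js
        split
        · assumption
        · exact mul_nonneg hK3nn (hqann js)
      calc (∑ js : Fin a → J, if (∏ k, q t (js k)) ≤ K3 * qa js then ∏ k, q t (js k) else 0)
          ≤ ∑ js : Fin a → J, K3 * qa js := Finset.sum_le_sum fun js _ => h2 js
        _ = K3 * ∑ js : Fin a → J, qa js := by rw [Finset.mul_sum]
        _ = K3 := by rw [hqasum, mul_one]
    linarith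
  -- assemble
  have hfactor : ∀ t, (∑ xs : Fin a → X, ∑ js : Fin a → J, (1 / c) *
        (if Va xs js ≤ K1 * qa js then (∏ k, r (xs k)) * ∏ k, V t (xs k) (js k) else 0))
      = (1 / c) * ∑ xs : Fin a → X, ∑ js : Fin a → J,
        (if Va xs js ≤ K1 * qa js then (∏ k, r (xs k)) * ∏ k, V t (xs k) (js k) else 0) := by
    intro t
    rw [Finset.mul_sum]
    exact Finset.sum_congr rfl fun xs _ => (Finset.mul_sum _ _ _).symm
  simp_rw [hfactor]
  have hfinal : (∑ t, (1 / c) * (∑ xs : Fin a → X, ∑ js : Fin a → J,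
        (if Va xs js ≤ K1 * qa js then (∏ k, r (xs k)) * ∏ k, V t (xs k) (js k) else 0)))
      ≤ ∑ t, (1 / c) * ((∑ xs : Fin a → X, ∑ js : Fin a → J,
          if (∏ k, V t (xs k) (js k)) ≤ K2 * ∏ k, q t (js k)
          then (∏ k, r (xs k)) * ∏ k, V t (xs k) (js k) else 0) + K3) :=
    Finset.sum_le_sum fun t _ =>
      mul_le_mul_of_nonneg_left (hper t) (by positivity)
  refine le_trans hfinal ?_
  have hsplit : ∀ t, (1 / c) * ((∑ xs : Fin a → X, ∑ js : Fin a → J,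
          if (∏ k, V t (xs k) (js k)) ≤ K2 * ∏ k, q t (js k)
          then (∏ k, r (xs k)) * ∏ k, V t (xs k) (js k) else 0) + K3)
      = (1 / c) * (∑ xs : Fin a → X, ∑ js : Fin a → J,
          if (∏ k, V t (xs k) (js k)) ≤ K2 * ∏ k, q t (js k)
          then (∏ k, r (xs k)) * ∏ k, V t (xs k) (js k) else 0) + (1 / c) * K3 :=
    fun t => mul_add _ _ _
  simp_rw [hsplit]
  rw [Finset.sum_add_distrib, Finset.sum_const, Finset.card_univ, nsmul_eq_mul,
    ← Finset.mul_sum]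
  have hlast : ((Fintype.card T : ℝ)) * ((1 / c) * K3) = K3 := by
    rw [hcdef, ← mul_assoc, mul_one_div, div_self hcne, one_mul]
  rw [hlast]
end

section
/- Let (T, Σ, μ) be a probability space, A a finite set, and {W_t}_{t∈T} a measurable family of cq-channels A → S(H). For p ∈ P(A) let a(p) := ess-inf_{t∈T} χ(p, W_t) and T_p := {t ∈ T : χ(p, W_t) ≥ a(p)}. Then sup_{p∈P(A)} max_{q∈P(A)} inf_{t∈T_p} χ(q, W_t) = sup_{q∈P(A)} ess-inf_{t∈T} χ(q, W_t). -/
open Matrix Kronecker BigOperators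
open scoped ComplexOrder
open Classical

open MeasureTheory

lemma trace_mul_matFun {n : Type*} [Fintype n] [DecidableEq n]
    {ρ : Matrix n n ℂ} (h : ρ.IsHermitian) (f : ℝ → ℝ) :
    (ρ * matFun f ρ).trace = ∑ i, ((h.eigenvalues i : ℂ) * (f (h.eigenvalues i) : ℂ)) := by
  rw [matFun, dif_pos h]
  set U : Matrix n n ℂ := (h.eigenvectorUnitary : Matrix n n ℂ) with hUdef
  have hU : star U * U = 1 := Matrix.UnitaryGroup.star_mul_self _
  set M : Matrix n n ℂ := Matrix.diagonal (RCLike.ofReal ∘ h.eigenvalues) with hM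
  set N : Matrix n n ℂ := Matrix.diagonal (fun i => (f (h.eigenvalues i) : ℂ)) with hN
  have hρ : ρ = U * M * star U := h.spectral_theorem
  have key : ρ * (U * N * star U) = U * (M * N) * star U := by
    rw [hρ]
    rw [mul_assoc (U*M) (star U) (U * N * star U), ← mul_assoc (star U) (U*N) (star U),
      ← mul_assoc (star U) U N, hU, one_mul, ← mul_assoc, ← mul_assoc]
  rw [key, Matrix.trace_mul_cycle, ← mul_assoc, hU, one_mul]
  rw [hM, hN, Matrix.diagonal_mul_diagonal, Matrix.trace_diagonal]
  rfl

lemma trace_eq_sum_eig {n : Type*} [Fintype n] [DecidableEq n]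
    {ρ : Matrix n n ℂ} (h : ρ.IsHermitian) :
    ρ.trace = ∑ i, (h.eigenvalues i : ℂ) := by
  set U : Matrix n n ℂ := (h.eigenvectorUnitary : Matrix n n ℂ) with hUdef
  have hU : star U * U = 1 := Matrix.UnitaryGroup.star_mul_self _
  conv_lhs => rw [show ρ = (h.eigenvectorUnitary : Matrix n n ℂ) * Matrix.diagonal (RCLike.ofReal ∘ h.eigenvalues) * star (h.eigenvectorUnitary : Matrix n n ℂ) from h.spectral_theorem]
  rw [Matrix.trace_mul_cycle, Matrix.UnitaryGroup.star_mul_self, one_mul, Matrix.trace_diagonal]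
  rfl

lemma vnEnt_eq {n : Type*} [Fintype n] [DecidableEq n]
    {ρ : Matrix n n ℂ} (h : ρ.IsHermitian) :
    vnEnt ρ = ∑ i, -(h.eigenvalues i * Real.logb 2 (h.eigenvalues i)) := by
  rw [vnEnt, matLog, trace_mul_matFun h]
  rw [Complex.re_sum]
  rw [← Finset.sum_neg_distrib]
  refine Finset.sum_congr rfl fun i _ => ?_
  rw [← Complex.ofReal_mul, Complex.ofReal_re]

lemma neg_mul_logb_le_two {x : ℝ} (hx : 0 ≤ x) : -(x * Real.logb 2 x) ≤ 2 := by
  rcases eq_or_lt_of_le hx with h | h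
  · simp [← h]
  · have hlog : Real.log x⁻¹ ≤ x⁻¹ - 1 := Real.log_le_sub_one_of_pos (inv_pos.2 h)
    rw [Real.log_inv] at hlog
    have h1 : -(x * Real.log x) ≤ 1 := by
      have h2 := mul_le_mul_of_nonneg_left hlog hx
      have h3 : x * x⁻¹ = 1 := mul_inv_cancel₀ h.ne'
      nlinarith
    have hL : (0.6931471803 : ℝ) < Real.log 2 := Real.log_two_gt_d9
    rw [Real.logb, show -(x * (Real.log x / Real.log 2)) = -(x * Real.log x) / Real.log 2 from
      by ring, div_le_iff₀ (by linarith)]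
    nlinarith

lemma vnEnt_nonneg_and_le {n : Type*} [Fintype n] [DecidableEq n]
    {ρ : Matrix n n ℂ} (hP : ρ.PosSemidef) (hT : ρ.trace = 1) :
    0 ≤ vnEnt ρ ∧ vnEnt ρ ≤ 2 * Fintype.card n := by
  have h := hP.isHermitian
  have hsum : ∑ i, h.eigenvalues i = 1 := by
    have := trace_eq_sum_eig h
    rw [hT] at this
    have := congrArg Complex.re this.symm
    simpa [Complex.re_sum] using this
  have hpos : ∀ i, 0 ≤ h.eigenvalues i := hP.eigenvalues_nonneg
  have hle1 : ∀ i, h.eigenvalues i ≤ 1 := by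
    intro i
    calc h.eigenvalues i ≤ ∑ j, h.eigenvalues j :=
          Finset.single_le_sum (fun j _ => hpos j) (Finset.mem_univ i)
      _ = 1 := hsum
  rw [vnEnt_eq h]
  constructor
  · apply Finset.sum_nonneg
    intro i _
    have : h.eigenvalues i * Real.logb 2 (h.eigenvalues i) ≤ 0 :=
      mul_nonpos_of_nonneg_of_nonpos (hpos i)
        (Real.logb_nonpos (by norm_num) (hpos i) (hle1 i))
    linarith
  · calc ∑ i, -(h.eigenvalues i * Real.logb 2 (h.eigenvalues i))
        ≤ ∑ _i : n, (2:ℝ) := Finset.sum_le_sum fun i _ => neg_mul_logb_le_two (hpos i)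
    _ = 2 * Fintype.card n := by simp [mul_comm]
lemma smul_posSemidef {n : Type*} [Fintype n] {c : ℝ} (hc : 0 ≤ c)
    {M : Matrix n n ℂ} (hM : M.PosSemidef) : ((c : ℂ) • M).PosSemidef := by
  constructor
  · rw [Matrix.IsHermitian, Matrix.conjTranspose_smul, hM.isHermitian.eq]
    congr 1
    simp
  · intro x
    exact (hM.smul (a := (c : ℂ)) (by exact_mod_cast hc)).2 x

lemma avg_density {A : Type*} [Fintype A] {d : ℕ} {p : A → ℝ} (hp : IsProb p)
    {D : A → Matrix (Fin d) (Fin d) ℂ} (hD : ∀ a, IsDensity (D a)) :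
    IsDensity (avgState p D) := by
  constructor
  · apply Finset.sum_induction _ _ (fun a b => Matrix.PosSemidef.add) Matrix.PosSemidef.zero
    intro a _
    exact smul_posSemidef (hp.1 a) (hD a).1
  · rw [avgState, Matrix.trace_sum]
    have : ∀ a : A, ((p a : ℂ) • D a).trace = (p a : ℂ) := by
      intro a
      rw [Matrix.trace_smul, (hD a).2, smul_eq_mul, mul_one]
    rw [Finset.sum_congr rfl fun a _ => this a]
    rw [← Complex.ofReal_sum, hp.2, Complex.ofReal_one]

lemma holevo_bounds {A : Type*} [Fintype A] {d : ℕ} {p : A → ℝ} (hp : IsProb p)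
    {W : A → Matrix (Fin d) (Fin d) ℂ} (hW : ∀ a, IsDensity (W a)) :
    -(2 * d) ≤ holevo p W ∧ holevo p W ≤ 2 * d := by
  have havg := avg_density hp hW
  have h1 := vnEnt_nonneg_and_le havg.1 havg.2
  rw [Fintype.card_fin] at h1
  have hterm : ∀ a, 0 ≤ p a * vnEnt (W a) ∧ p a * vnEnt (W a) ≤ p a * (2 * d) := by
    intro a
    have h2 := vnEnt_nonneg_and_le (hW a).1 (hW a).2
    rw [Fintype.card_fin] at h2
    exact ⟨mul_nonneg (hp.1 a) h2.1, mul_le_mul_of_nonneg_left h2.2 (hp.1 a)⟩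
  have hs1 : 0 ≤ ∑ a, p a * vnEnt (W a) :=
    Finset.sum_nonneg fun a _ => (hterm a).1
  have hs2 : ∑ a, p a * vnEnt (W a) ≤ 2 * d := by
    calc ∑ a, p a * vnEnt (W a) ≤ ∑ a, p a * (2 * d) :=
          Finset.sum_le_sum fun a _ => (hterm a).2
      _ = (∑ a, p a) * (2 * d) := by rw [← Finset.sum_mul]
      _ = 2 * d := by rw [hp.2, one_mul]
  rw [holevo]
  constructor <;> [linarith [h1.1]; linarith [h1.2]]
lemma key_lemma {T : Type*} [MeasurableSpace T] (μ : Measure T) [IsProbabilityMeasure μ]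
    {ι : Type*} (F : ι → T → ℝ) (B : ℝ)
    (hlb : ∀ i t, -B ≤ F i t) (hub : ∀ i t, F i t ≤ B) :
    (⨆ p : ι, ⨆ q : ι, sInf (F q '' {t | essInfVal μ (F p) ≤ F p t}))
      = ⨆ q : ι, essInfVal μ (F q) := by
  rcases isEmpty_or_nonempty ι with hι | hι
  · rw [iSup_of_empty', iSup_of_empty']
  set C : ι → Set ℝ := fun q => {c : ℝ | μ {t | F q t < c} = 0} with hC
  set e : ι → ℝ := fun q => essInfVal μ (F q) with he
  set S : ι → Set T := fun p => {t | e p ≤ F p t} with hS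
  have heq : ∀ q, e q = sSup (C q) := fun q => rfl
  have hCne : ∀ q, (-B - 1) ∈ C q := by
    intro q
    have : {t | F q t < -B - 1} = (∅ : Set T) := by
      ext t
      simp only [Set.mem_setOf_eq, Set.mem_empty_iff_false, iff_false, not_lt]
      linarith [hlb q t]
    simp [hC, this]
  have hCub : ∀ q, ∀ c ∈ C q, c ≤ B + 1 := by
    intro q c hc
    by_contra hgt
    push_neg at hgt
    have huniv : {t | F q t < c} = Set.univ := by
      ext t
      simp only [Set.mem_setOf_eq, Set.mem_univ, iff_true]
      linarith [hub q t]
    have h1 : μ {t | F q t < c} = 1 := by rw [huniv]; exact measure_univ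
    rw [hc] at h1
    exact zero_ne_one h1
  have hCbdd : ∀ q, BddAbove (C q) := fun q => ⟨B + 1, fun c hc => hCub q c hc⟩
  have hnull : ∀ p, μ {t | F p t < e p} = 0 := by
    intro p
    have hsub : {t | F p t < e p} ⊆ ⋃ n : ℕ, {t | F p t < e p - 1 / (n + 1)} := by
      intro t ht
      obtain ⟨n, hn⟩ := exists_nat_one_div_lt (K := ℝ) (sub_pos.2 ht)
      exact Set.mem_iUnion.2 ⟨n, by simp only [Set.mem_setOf_eq]; linarith⟩
    refine measure_mono_null hsub (measure_iUnion_null fun n => ?_)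
    have h1 : e p - 1 / (n + 1 : ℝ) < e p := sub_lt_self _ (by positivity)
    rw [heq] at h1
    obtain ⟨c, hcC, hcgt⟩ := exists_lt_of_lt_csSup ⟨_, hCne p⟩ h1
    exact measure_mono_null (fun t ht => lt_trans ht hcgt) hcC
  have hSne : ∀ p, ∃ t, t ∈ S p := by
    intro p
    by_contra hno
    push_neg at hno
    have huniv : {t | F p t < e p} = Set.univ := by
      ext t
      simp only [Set.mem_setOf_eq, Set.mem_univ, iff_true]
      exact lt_of_not_ge fun h => hno t h
    have := hnull p
    rw [huniv, measure_univ] at this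
    exact one_ne_zero this
  have himg_ne : ∀ p q, (F q '' S p).Nonempty := by
    intro p q
    obtain ⟨t, ht⟩ := hSne p
    exact ⟨F q t, t, ht, rfl⟩
  have himg_bdd : ∀ p q, BddBelow (F q '' S p) := by
    intro p q
    refine ⟨-B, ?_⟩
    rintro x ⟨t, _, rfl⟩
    exact hlb q t
  have key1 : ∀ p q, sInf (F q '' S p) ≤ e q := by
    intro p q
    have hmem : sInf (F q '' S p) ∈ C q := by
      refine measure_mono_null (fun t ht => ?_) (hnull p)
      simp only [Set.mem_setOf_eq] at ht ⊢
      by_contra h2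
      push_neg at h2
      exact absurd (csInf_le (himg_bdd p q) ⟨t, h2, rfl⟩) (not_le.2 ht)
    rw [heq]
    exact le_csSup (hCbdd q) hmem
  have key2 : ∀ q, e q ≤ sInf (F q '' S q) := by
    intro q
    refine le_csInf (himg_ne q q) ?_
    rintro x ⟨t, ht, rfl⟩
    exact ht
  have gub : ∀ p q, sInf (F q '' S p) ≤ B := by
    intro p q
    obtain ⟨t, ht⟩ := hSne p
    exact csInf_le_of_le (himg_bdd p q) ⟨t, ht, rfl⟩ (hub q t)
  apply le_antisymm
  · refine ciSup_le fun p => ciSup_le fun q => ?_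
    refine (key1 p q).trans (le_ciSup ⟨B + 1, ?_⟩ q)
    rintro x ⟨q', rfl⟩
    exact csSup_le ⟨_, hCne q'⟩ (hCub q')
  · refine ciSup_le fun q => ?_
    refine (key2 q).trans ?_
    have h1 : sInf (F q '' S q) ≤ ⨆ q' : ι, sInf (F q' '' {t | essInfVal μ (F q) ≤ F q t}) := by
      refine le_ciSup (f := fun q' : ι => sInf (F q' '' {t | essInfVal μ (F q) ≤ F q t})) ⟨B, ?_⟩ q
      rintro x ⟨q', rfl⟩
      exact gub q q'
    refine h1.trans (le_ciSup
      (f := fun p : ι => ⨆ q' : ι, sInf (F q' '' {t | essInfVal μ (F p) ≤ F p t})) ⟨B, ?_⟩ q)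
    rintro x ⟨p, rfl⟩
    exact ciSup_le fun q' => gub p q'

/-- sup over p and q of inf over T_p equals sup of the essential infimum. -/
theorem stmt13 {T : Type*} [MeasurableSpace T] (μ : Measure T) [IsProbabilityMeasure μ]
    {A : Type*} [Fintype A] {d : ℕ} (W : T → A → Matrix (Fin d) (Fin d) ℂ)
    (hW : ∀ t a, IsDensity (W t a))
    (hmeas : ∀ p : A → ℝ, IsProb p → Measurable fun t => holevo p (W t)) :
    (⨆ p : {p : A → ℝ // IsProb p}, ⨆ q : {p : A → ℝ // IsProb p},
      sInf ((fun t => holevo q.1 (W t)) ''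
        {t | essInfVal μ (fun s => holevo p.1 (W s)) ≤ holevo p.1 (W t)}))
    = ⨆ q : {p : A → ℝ // IsProb p}, essInfVal μ (fun t => holevo q.1 (W t)) :=
  key_lemma μ (fun (p : {p : A → ℝ // IsProb p}) t => holevo p.1 (W t)) (2 * d)
    (fun i t => (holevo_bounds i.2 (hW t)).1)
    (fun i t => (holevo_bounds i.2 (hW t)).2)
end
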